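/- arXiv:2104.09149 — 3 statements merged into one kernel-verified Lean document; each statement's English description precedes it below -/
import Mathlib

section
/- Suppose in addition that E is convex on P(X) and that e_0 := E(μ0) < ∞. Then the entropy S(e) is increasing on (−∞, e_0], strictly increasing on the subset of (−∞, e_0] where S(e) > −∞, and for every e ≤ e_0 one has S(e) = sup{ S(μ) : μ ∈ P(X), E(μ) ≤ e }. -/
open MeasureTheory Filter Set Topology
open scoped Classical

noncomputable section

/-- The entropy `S(μ)` of `μ` relative to `μ0`: `-∫ log(dμ/dμ0) dμ` if `μ ≪ μ0`
(and `-∞` if this integral equals `+∞`), and `-∞` otherwise. -/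
def Sm {X : Type*} [MeasurableSpace X] (μ0 μ : Measure X) : EReal :=
  if μ ≪ μ0 ∧ Integrable (fun x => Real.log ((μ.rnDeriv μ0 x).toReal)) μ
  then ((-(∫ x, Real.log ((μ.rnDeriv μ0 x).toReal) ∂μ) : ℝ) : EReal)
  else ⊥

/-- The affine combination `(1-t)·μ + t·ν` of two probability measures (for `t ∈ [0,1]`). -/
def pmAffine {X : Type*} [MeasurableSpace X] (μ ν : ProbabilityMeasure X) (t : ℝ) :
    ProbabilityMeasure X :=
  if h : 0 ≤ t ∧ t ≤ 1 then
    ⟨ENNReal.ofReal (1 - t) • (μ : Measure X) + ENNReal.ofReal t • (ν : Measure X), by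
      constructor
      simp only [Measure.coe_add, Measure.coe_smul, Pi.add_apply, Pi.smul_apply,
        smul_eq_mul, measure_univ, mul_one]
      rw [← ENNReal.ofReal_add (by linarith [h.2]) h.1, sub_add_cancel, ENNReal.ofReal_one]⟩
  else μ

/-- The entropy at energy `e`: `S(e) = sup { S(μ) : μ ∈ P(X), E(μ) = e }`
(equal to `-∞` if no such `μ` exists). -/
def Sent {X : Type*} [MeasurableSpace X] (μ0 : ProbabilityMeasure X)
    (E : ProbabilityMeasure X → EReal) (e : ℝ) : EReal :=
  sSup {s : EReal | ∃ μ : ProbabilityMeasure X,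
    E μ = (e : EReal) ∧ s = Sm (μ0 : Measure X) (μ : Measure X)}

/-- `E` is convex on `P(X)`. -/
def EConvex {X : Type*} [MeasurableSpace X] (E : ProbabilityMeasure X → EReal) : Prop :=
  ∀ μ ν : ProbabilityMeasure X, ∀ t : ℝ, 0 ≤ t → t ≤ 1 →
    E (pmAffine μ ν t) ≤ ((1 - t : ℝ) : EReal) * E μ + ((t : ℝ) : EReal) * E ν

/-- `E` has the affine continuity property: for every `μ1 ∈ P(X)` with `E(μ1) < ∞` and
`S(μ1) > -∞`, the function `t ↦ E((1-t)μ0 + tμ1)` is continuous on `[0,1]`. -/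
def AffineCont {X : Type*} [MeasurableSpace X] (μ0 : ProbabilityMeasure X)
    (E : ProbabilityMeasure X → EReal) : Prop :=
  ∀ μ1 : ProbabilityMeasure X, E μ1 ≠ ⊤ → Sm (μ0 : Measure X) (μ1 : Measure X) ≠ ⊥ →
    ContinuousOn (fun t => E (pmAffine μ0 μ1 t)) (Icc (0:ℝ) 1)

/-- `μ0` has the energy approximation property for `E`. -/
def EnergyApprox {X : Type*} [MeasurableSpace X] [TopologicalSpace X] [OpensMeasurableSpace X]
    (μ0 : ProbabilityMeasure X) (E : ProbabilityMeasure X → EReal) : Prop :=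
  ∀ μ : ProbabilityMeasure X, ∃ μs : ℕ → ProbabilityMeasure X,
    (∀ j, (μs j : Measure X) ≪ (μ0 : Measure X)) ∧
    Tendsto μs atTop (nhds μ) ∧
    Tendsto (fun j => E (μs j)) atTop (nhds (E μ))

/-- The free energy functional `F_β(μ) = βE(μ) − S(μ)` (equal to `+∞` when `S(μ) = −∞`). -/
def Fbeta {X : Type*} [MeasurableSpace X] (μ0 : ProbabilityMeasure X)
    (E : ProbabilityMeasure X → EReal) (β : ℝ) (μ : ProbabilityMeasure X) : EReal :=
  if Sm (μ0 : Measure X) (μ : Measure X) = ⊥ then ⊤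
  else (β : EReal) * E μ - Sm (μ0 : Measure X) (μ : Measure X)

/-- The free energy `F(β) = inf_{μ ∈ P(X)} (βE(μ) − S(μ))`. -/
def freeEnergy {X : Type*} [MeasurableSpace X] (μ0 : ProbabilityMeasure X)
    (E : ProbabilityMeasure X → EReal) (β : ℝ) : EReal :=
  ⨅ μ : ProbabilityMeasure X, Fbeta μ0 E β μ

/-- The concave Legendre–Fenchel transform `f*(y) := inf_{x ∈ ℝ} (x·y − f(x))`. -/
def LegT (f : ℝ → EReal) (y : ℝ) : EReal := ⨅ x : ℝ, ((x * y : ℝ) : EReal) - f x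

/-- Concavity of an `EReal`-valued function on a set of reals. -/
def ConcOn (s : Set ℝ) (f : ℝ → EReal) : Prop :=
  ∀ x ∈ s, ∀ y ∈ s, ∀ t : ℝ, 0 ≤ t → t ≤ 1 →
    ((t : ℝ) : EReal) * f x + ((1 - t : ℝ) : EReal) * f y ≤ f (t * x + (1 - t) * y)

/-- Strict concavity of an `EReal`-valued function on a set of reals. -/
def StrictConcOn (s : Set ℝ) (f : ℝ → EReal) : Prop :=
  ∀ x ∈ s, ∀ y ∈ s, x ≠ y → ∀ t : ℝ, 0 < t → t < 1 →
    ((t : ℝ) : EReal) * f x + ((1 - t : ℝ) : EReal) * f y < f (t * x + (1 - t) * y)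

namespace Statement0Aux

lemma phi0_nonneg {x : ℝ} (hx : 0 ≤ x) : 0 ≤ x * Real.log x - x + 1 := by
  rcases eq_or_lt_of_le hx with h | h
  · simp [← h]
  · have h1 : 1 - x⁻¹ ≤ Real.log x := Real.one_sub_inv_le_log_of_pos h
    have h2 : x * x⁻¹ = 1 := mul_inv_cancel₀ h.ne'
    nlinarith [mul_le_mul_of_nonneg_left h1 hx]

lemma tangent {x y : ℝ} (hx : 0 ≤ x) (hy : 0 < y) :
    Real.log y * (x - y) ≤ x * Real.log x - x + 1 := by
  rcases eq_or_lt_of_le hx with h | hxpos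
  · rw [← h]
    have h1 : 1 - y⁻¹ ≤ Real.log y := Real.one_sub_inv_le_log_of_pos hy
    have h2 : y * y⁻¹ = 1 := mul_inv_cancel₀ hy.ne'
    simp only [Real.log_zero, mul_zero, zero_sub, zero_mul, zero_add, zero_sub]
    nlinarith [mul_le_mul_of_nonneg_left h1 hy.le]
  · have h1 : 1 - (x / y)⁻¹ ≤ Real.log (x / y) := Real.one_sub_inv_le_log_of_pos (div_pos hxpos hy)
    have h2 : Real.log (x / y) = Real.log x - Real.log y := Real.log_div hxpos.ne' hy.ne'
    have h3 : (x / y)⁻¹ = y / x := by rw [inv_div]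
    rw [h2, h3] at h1
    -- multiply by x > 0 : x log x - x log y ≥ x - y
    have h4 : x - y ≤ x * (Real.log x - Real.log y) := by
      have := mul_le_mul_of_nonneg_left h1 hxpos.le
      have h5 : x * (y / x) = y := by field_simp
      nlinarith
    -- phi0 at y
    have h6 : 0 ≤ y * Real.log y - y + 1 := phi0_nonneg hy.le
    nlinarith

lemma phi_combo {a t : ℝ} (ha : 0 ≤ a) (ht0 : 0 ≤ t) (ht1 : t ≤ 1) :
    ((1 - t) * a + t) * Real.log ((1 - t) * a + t) ≤ (1 - t) * (a * Real.log a) := by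
  have h := Real.convexOn_mul_log.2 (Set.mem_Ici.2 ha) (Set.mem_Ici.2 (zero_le_one))
    (by linarith : (0:ℝ) ≤ 1 - t) ht0 (by ring)
  simpa using h

lemma abs_sub_one_le {ε x : ℝ} (hε : 0 < ε) (hε2 : ε ≤ 1/2) (hx : 0 ≤ x) :
    |x - 1| ≤ 2 * ε + (4 / ε) * (x * Real.log x - x + 1) := by
  have hφ := phi0_nonneg hx
  have hKpos : (0:ℝ) < 4 / ε := by positivity
  rcases le_or_gt (|x - 1|) (2 * ε) with h | h
  · nlinarith
  rcases abs_cases (x - 1) with ⟨he, hge⟩ | ⟨he, hlt⟩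
  · -- x ≥ 1, and x - 1 > 2ε
    rw [he] at h ⊢
    have hy : (0:ℝ) < 1 + ε := by linarith
    have ht := tangent hx hy
    have hlog : ε / 2 ≤ Real.log (1 + ε) := by
      have h1 : 1 - (1 + ε)⁻¹ ≤ Real.log (1 + ε) := Real.one_sub_inv_le_log_of_pos hy
      have h2 : (1 + ε) * (1 + ε)⁻¹ = 1 := mul_inv_cancel₀ hy.ne'
      have h3 : (0:ℝ) ≤ (1 + ε)⁻¹ := by positivity
      nlinarith
    -- φ(x) ≥ log(1+ε) * (x - 1 - ε) ≥ (ε/2) * ((x-1)/2)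
    have h4 : (ε / 2) * (x - (1 + ε)) ≤ Real.log (1 + ε) * (x - (1 + ε)) := by
      apply mul_le_mul_of_nonneg_right hlog; linarith
    have hKe : (4 / ε) * ε = 4 := by field_simp
    nlinarith [mul_le_mul_of_nonneg_left (h4.trans ht) hKpos.le]
  · -- x < 1, 1 - x > 2ε
    rw [he] at h ⊢
    have hy : (0:ℝ) < 1 - ε := by linarith
    have ht := tangent hx hy
    have hlog : Real.log (1 - ε) ≤ -ε := by
      have := Real.log_le_sub_one_of_pos hy; linarith
    -- log(1-ε) * (x - (1-ε)) ≥ (-ε) * (x - (1-ε))  since x - (1-ε) ≤ 0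
    have h4 : (-ε) * (x - (1 - ε)) ≤ Real.log (1 - ε) * (x - (1 - ε)) := by
      apply mul_le_mul_of_nonpos_right hlog; linarith
    have hKe : (4 / ε) * ε = 4 := by field_simp
    nlinarith [mul_le_mul_of_nonneg_left (h4.trans ht) hKpos.le]


variable {X : Type*} [MeasurableSpace X]

lemma kl_nonneg (μ ν : Measure X) [IsProbabilityMeasure μ] [IsProbabilityMeasure ν]
    (hμν : μ ≪ ν) (hInt : Integrable (llr μ ν) μ) :
    0 ≤ ∫ x, llr μ ν x ∂μ := by
  have hch : ∫ x, (μ.rnDeriv ν x).toReal • llr μ ν x ∂ν = ∫ x, llr μ ν x ∂μ :=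
    integral_rnDeriv_smul hμν
  have hF : Integrable (fun x => (μ.rnDeriv ν x).toReal) ν := Measure.integrable_toReal_rnDeriv
  have hF1 : Integrable (fun x => (μ.rnDeriv ν x).toReal - 1) ν := hF.sub (integrable_const 1)
  have hφ : Integrable (fun x => (μ.rnDeriv ν x).toReal • llr μ ν x) ν :=
    (integrable_rnDeriv_smul_iff hμν).mpr hInt
  have hmono : (fun x => (μ.rnDeriv ν x).toReal - 1) ≤
      fun x => (μ.rnDeriv ν x).toReal • llr μ ν x := by
    intro x
    have := phi0_nonneg (ENNReal.toReal_nonneg : 0 ≤ (μ.rnDeriv ν x).toReal)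
    simp only [llr, smul_eq_mul]
    linarith
  have hint2 := integral_mono hF1 hφ hmono
  have h0 : ∫ x, ((μ.rnDeriv ν x).toReal - 1) ∂ν = 0 := by
    rw [integral_sub hF (integrable_const 1), Measure.integral_toReal_rnDeriv hμν]
    simp
  rw [hch, h0] at hint2
  exact hint2

lemma Sm_eq (μ0 μ : Measure X) : Sm μ0 μ =
    if μ ≪ μ0 ∧ Integrable (llr μ μ0) μ
    then ((-(∫ x, llr μ μ0 x ∂μ) : ℝ) : EReal) else ⊥ := rfl

lemma mix_lemma (μ ν : Measure X) [IsProbabilityMeasure μ] [IsProbabilityMeasure ν]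
    (hμν : μ ≪ ν) (hInt : Integrable (llr μ ν) μ) {t : ℝ} (ht0 : 0 ≤ t) (ht1 : t ≤ 1)
    (m : Measure X) [IsProbabilityMeasure m]
    (hm : m = ENNReal.ofReal (1 - t) • μ + ENNReal.ofReal t • ν) :
    m ≪ ν ∧ Integrable (llr m ν) m ∧
      ∫ x, llr m ν x ∂m ≤ (1 - t) * ∫ x, llr μ ν x ∂μ := by
  haveI h1 : IsFiniteMeasure (ENNReal.ofReal (1 - t) • μ) := by
    constructor
    simp only [Measure.smul_apply, smul_eq_mul]
    exact ENNReal.mul_lt_top ENNReal.ofReal_lt_top (measure_lt_top μ _)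
  haveI h2 : IsFiniteMeasure (ENNReal.ofReal t • ν) := by
    constructor
    simp only [Measure.smul_apply, smul_eq_mul]
    exact ENNReal.mul_lt_top ENNReal.ofReal_lt_top (measure_lt_top ν _)
  have hmac : m ≪ ν := by
    rw [hm]
    intro s hs
    simp [Measure.smul_apply, hμν hs, hs]
  -- density of m
  have hd : (fun x => (m.rnDeriv ν x).toReal) =ᵐ[ν]
      (fun x => (1 - t) * (μ.rnDeriv ν x).toReal + t) := by
    have hadd : m.rnDeriv ν =ᵐ[ν]
        (ENNReal.ofReal (1 - t) • μ).rnDeriv ν + (ENNReal.ofReal t • ν).rnDeriv ν := by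
      rw [hm]; exact Measure.rnDeriv_add _ _ _
    have hs1 : (ENNReal.ofReal (1 - t) • μ).rnDeriv ν =ᵐ[ν]
        ENNReal.ofReal (1 - t) • μ.rnDeriv ν :=
      Measure.rnDeriv_smul_left_of_ne_top μ ν ENNReal.ofReal_ne_top
    have hs2 : (ENNReal.ofReal t • ν).rnDeriv ν =ᵐ[ν] ENNReal.ofReal t • ν.rnDeriv ν :=
      Measure.rnDeriv_smul_left_of_ne_top ν ν ENNReal.ofReal_ne_top
    have hself := Measure.rnDeriv_self ν
    filter_upwards [hadd, hs1, hs2, hself, Measure.rnDeriv_ne_top μ ν] with x e1 e2 e3 e4 e5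
    rw [e1]
    simp only [Pi.add_apply, Pi.smul_apply, smul_eq_mul] at e2 e3 ⊢
    rw [e2, e3, e4, mul_one,
      ENNReal.toReal_add (ENNReal.mul_ne_top ENNReal.ofReal_ne_top e5) ENNReal.ofReal_ne_top,
      ENNReal.toReal_mul, ENNReal.toReal_ofReal (by linarith), ENNReal.toReal_ofReal ht0]
  set F : X → ℝ := fun x => (μ.rnDeriv ν x).toReal with hF_def
  set G : X → ℝ := fun x => (m.rnDeriv ν x).toReal with hG_def
  have hφF : Integrable (fun x => F x * llr μ ν x) ν := by
    have := (integrable_rnDeriv_smul_iff hμν).mpr hInt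
    simpa [smul_eq_mul] using this
  have hGint : Integrable G ν := Measure.integrable_toReal_rnDeriv
  have hG1 : Integrable (fun x => |G x - 1|) ν := (hGint.sub (integrable_const 1)).abs
  have hφFa : Integrable (fun x => |(1 - t) * (F x * llr μ ν x)|) ν :=
    (hφF.const_mul (1 - t)).abs
  have hGmeas : Measurable G := (Measure.measurable_rnDeriv m ν).ennreal_toReal
  have hφGmeas : AEStronglyMeasurable (fun x => G x * Real.log (G x)) ν :=
    (hGmeas.mul (Real.measurable_log.comp hGmeas)).aestronglyMeasurable
  have hlow : ∀ᵐ x ∂ν, G x - 1 ≤ G x * Real.log (G x) := by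
    filter_upwards with x
    have := phi0_nonneg (ENNReal.toReal_nonneg : 0 ≤ G x)
    linarith
  have hupp : ∀ᵐ x ∂ν, G x * Real.log (G x) ≤ (1 - t) * (F x * llr μ ν x) := by
    filter_upwards [hd] with x hx
    have h5 : F x * llr μ ν x = F x * Real.log (F x) := by simp [llr, hF_def]
    rw [h5, hx]
    exact phi_combo ENNReal.toReal_nonneg ht0 ht1
  have hφG : Integrable (fun x => G x * Real.log (G x)) ν := by
    apply Integrable.mono' (hG1.add hφFa) hφGmeas
    filter_upwards [hlow, hupp] with x h1 h2
    rw [Real.norm_eq_abs, abs_le]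
    constructor
    · have h4 : -(|G x - 1|) ≤ G x - 1 := neg_abs_le _
      have h3 : (0:ℝ) ≤ |(1 - t) * (F x * llr μ ν x)| := abs_nonneg _
      simp only [Pi.add_apply]
      linarith
    · have h4 : (1 - t) * (F x * llr μ ν x) ≤ |(1 - t) * (F x * llr μ ν x)| := le_abs_self _
      have h3 : (0:ℝ) ≤ |G x - 1| := abs_nonneg _
      simp only [Pi.add_apply]
      linarith
  have hmint : Integrable (llr m ν) m := by
    apply (integrable_rnDeriv_smul_iff hmac).mp
    simpa [llr, smul_eq_mul] using hφG
  refine ⟨hmac, hmint, ?_⟩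
  have e1 : ∫ x, llr m ν x ∂m = ∫ x, G x * Real.log (G x) ∂ν := by
    rw [← integral_rnDeriv_smul hmac (f := llr m ν)]
    simp [llr, smul_eq_mul]
    rfl
  have e2 : ∫ x, llr μ ν x ∂μ = ∫ x, F x * llr μ ν x ∂ν := by
    rw [← integral_rnDeriv_smul hμν (f := llr μ ν)]
    simp [smul_eq_mul]
    rfl
  have e3 : ∫ x, G x * Real.log (G x) ∂ν ≤ ∫ x, (1 - t) * (F x * llr μ ν x) ∂ν :=
    integral_mono_ae hφG (hφF.const_mul (1 - t)) hupp
  rw [e1, e2]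
  rw [integral_const_mul] at e3
  exact e3

lemma l1_bound (μ ν : Measure X) [IsProbabilityMeasure μ] [IsProbabilityMeasure ν]
    (hμν : μ ≪ ν) (hInt : Integrable (llr μ ν) μ) {ε : ℝ} (hε : 0 < ε) (hε2 : ε ≤ 1/2) :
    ∫ x, |(μ.rnDeriv ν x).toReal - 1| ∂ν ≤ 2 * ε + (4 / ε) * ∫ x, llr μ ν x ∂μ := by
  set F : X → ℝ := fun x => (μ.rnDeriv ν x).toReal with hF_def
  have hF : Integrable F ν := Measure.integrable_toReal_rnDeriv
  have hFa : Integrable (fun x => |F x - 1|) ν := (hF.sub (integrable_const 1)).abs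
  have hφF : Integrable (fun x => F x * llr μ ν x) ν := by
    have := (integrable_rnDeriv_smul_iff hμν).mpr hInt
    simpa [smul_eq_mul] using this
  have hφF' : Integrable (fun x => F x * Real.log (F x)) ν := by
    simpa [llr] using hφF
  have hφ0 : Integrable (fun x => F x * Real.log (F x) - F x + 1) ν :=
    (hφF'.sub hF).add (integrable_const 1)
  have hφ0' : Integrable (fun x => (4 / ε) * (F x * Real.log (F x) - F x + 1)) ν :=
    hφ0.const_mul (4 / ε)
  have hRHSint : Integrable (fun x => 2 * ε + (4 / ε) * (F x * Real.log (F x) - F x + 1)) ν :=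
    (integrable_const (2 * ε)).add hφ0'
  have hmono : (fun x => |F x - 1|) ≤
      fun x => 2 * ε + (4 / ε) * (F x * Real.log (F x) - F x + 1) := fun x =>
    abs_sub_one_le hε hε2 ENNReal.toReal_nonneg
  have h := integral_mono hFa hRHSint hmono
  have hRHS : ∫ x, (2 * ε + (4 / ε) * (F x * Real.log (F x) - F x + 1)) ∂ν
      = 2 * ε + (4 / ε) * ∫ x, llr μ ν x ∂μ := by
    have hsub : Integrable (fun x => F x * Real.log (F x) - F x) ν := hφF'.sub hF
    have e2 : ∫ x, llr μ ν x ∂μ = ∫ x, F x * Real.log (F x) ∂ν := by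
      rw [← integral_rnDeriv_smul hμν (f := llr μ ν)]
      simp [llr, smul_eq_mul]
      rfl
    rw [integral_add (integrable_const _) hφ0', integral_const, integral_const_mul,
      integral_add hsub (integrable_const 1), integral_const,
      integral_sub hφF' hF, Measure.integral_toReal_rnDeriv hμν, e2]
    simp [measure_univ]
  rw [hRHS] at h
  exact h


lemma pmAffine_coe (μ ν : ProbabilityMeasure X) {t : ℝ} (ht0 : 0 ≤ t) (ht1 : t ≤ 1) :
    (pmAffine μ ν t : Measure X) =
      ENNReal.ofReal (1 - t) • (μ : Measure X) + ENNReal.ofReal t • (ν : Measure X) := by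
  rw [pmAffine]
  erw [dif_pos ⟨ht0, ht1⟩]
  rfl

lemma pmAffine_zero (μ ν : ProbabilityMeasure X) : pmAffine μ ν 0 = μ := by
  apply ProbabilityMeasure.toMeasure_injective
  rw [pmAffine_coe μ ν le_rfl zero_le_one]
  simp

lemma pmAffine_one (μ ν : ProbabilityMeasure X) : pmAffine μ ν 1 = ν := by
  apply ProbabilityMeasure.toMeasure_injective
  rw [pmAffine_coe μ ν zero_le_one le_rfl]
  simp

lemma pmAffine_comp (μ ν : ProbabilityMeasure X) {a r : ℝ} (ha0 : 0 ≤ a) (ha1 : a ≤ 1)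
    (hr0 : 0 ≤ r) (hr1 : r ≤ 1) :
    pmAffine (pmAffine μ ν a) ν r = pmAffine μ ν (a + r * (1 - a)) := by
  have hu0 : 0 ≤ a + r * (1 - a) := by nlinarith
  have hu1 : a + r * (1 - a) ≤ 1 := by nlinarith
  apply ProbabilityMeasure.toMeasure_injective
  rw [pmAffine_coe _ ν hr0 hr1, pmAffine_coe μ ν ha0 ha1, pmAffine_coe μ ν hu0 hu1]
  rw [smul_add, smul_smul, smul_smul, ← ENNReal.ofReal_mul (by linarith : (0:ℝ) ≤ 1 - r),
    ← ENNReal.ofReal_mul (by linarith : (0:ℝ) ≤ 1 - r), add_assoc, ← add_smul,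
    ← ENNReal.ofReal_add (by nlinarith) hr0]
  have h1 : (1 - r) * (1 - a) = 1 - (a + r * (1 - a)) := by ring
  have h2 : (1 - r) * a + r = a + r * (1 - a) := by ring
  rw [h1, h2]

variable [TopologicalSpace X] [OpensMeasurableSpace X]

lemma pmAffine_continuousOn (μ ν : ProbabilityMeasure X) :
    ContinuousOn (fun t => pmAffine μ ν t) (Icc (0:ℝ) 1) := by
  intro t ht
  have key : ∀ s ∈ Icc (0:ℝ) 1, ∀ h : BoundedContinuousFunction X ℝ,
      ∫ x, h x ∂(pmAffine μ ν s : Measure X) =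
        (1 - s) * ∫ x, h x ∂(μ : Measure X) + s * ∫ x, h x ∂(ν : Measure X) := by
    intro s hs h
    rw [pmAffine_coe μ ν hs.1 hs.2, integral_add_measure
      ((h.integrable _).smul_measure ENNReal.ofReal_ne_top)
      ((h.integrable _).smul_measure ENNReal.ofReal_ne_top),
      integral_smul_measure, integral_smul_measure,
      ENNReal.toReal_ofReal (by linarith [hs.2] : (0:ℝ) ≤ 1 - s),
      ENNReal.toReal_ofReal hs.1, smul_eq_mul, smul_eq_mul]
  show ContinuousWithinAt (fun t => pmAffine μ ν t) (Icc (0:ℝ) 1) t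
  rw [ContinuousWithinAt]
  rw [ProbabilityMeasure.tendsto_iff_forall_integral_tendsto]
  intro h
  have hc : ContinuousWithinAt
      (fun s => (1 - s) * ∫ x, h x ∂(μ : Measure X) + s * ∫ x, h x ∂(ν : Measure X))
      (Icc (0:ℝ) 1) t := (Continuous.continuousWithinAt (by continuity))
  have := hc.congr (fun s hs => key s hs h) (key t ht h)
  exact this

lemma sublevel_closed (μ ν : ProbabilityMeasure X) (E : ProbabilityMeasure X → EReal)
    (hE : LowerSemicontinuous E) (c : EReal) :
    IsClosed {t : ℝ | t ∈ Icc (0:ℝ) 1 ∧ E (pmAffine μ ν t) ≤ c} := by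
  have h1 : IsClosed (E ⁻¹' Iic c) := hE.isClosed_preimage c
  have h2 := (pmAffine_continuousOn μ ν).preimage_isClosed_of_isClosed isClosed_Icc h1
  have : {t : ℝ | t ∈ Icc (0:ℝ) 1 ∧ E (pmAffine μ ν t) ≤ c}
      = Icc (0:ℝ) 1 ∩ (fun t => pmAffine μ ν t) ⁻¹' (E ⁻¹' Iic c) := by
    ext t; simp [Set.mem_inter_iff, Set.mem_preimage, Set.mem_Iic]
  rw [this]
  exact h2

lemma tendsto_of_kl (ν : ProbabilityMeasure X) (μs : ℕ → ProbabilityMeasure X)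
    (hac : ∀ n, (μs n : Measure X) ≪ (ν : Measure X))
    (hInt : ∀ n, Integrable (llr (μs n : Measure X) (ν : Measure X)) (μs n : Measure X))
    (hKL0 : ∀ n, 0 ≤ ∫ x, llr (μs n : Measure X) (ν : Measure X) x ∂(μs n : Measure X))
    (hKL : Tendsto (fun n => ∫ x, llr (μs n : Measure X) (ν : Measure X) x ∂(μs n : Measure X))
      atTop (𝓝 0)) :
    Tendsto μs atTop (𝓝 ν) := by
  set KL : ℕ → ℝ :=
    fun n => ∫ x, llr (μs n : Measure X) (ν : Measure X) x ∂(μs n : Measure X) with hKLdef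
  set a : ℕ → ℝ :=
    fun n => ∫ x, |((μs n : Measure X).rnDeriv (ν : Measure X) x).toReal - 1| ∂(ν : Measure X)
    with ha_def
  have ha0 : ∀ n, 0 ≤ a n := fun n => integral_nonneg (fun x => abs_nonneg _)
  have haT : Tendsto a atTop (𝓝 0) := by
    rw [Metric.tendsto_atTop]
    intro δ hδ
    set ε := min (δ/4) (1/2) with hεdef
    have hε : 0 < ε := lt_min (by linarith) (by norm_num)
    have hε2 : ε ≤ 1/2 := min_le_right _ _
    have hε4 : 2*ε ≤ δ/2 := by
      have := min_le_left (δ/4) (1/2); simp only [← hεdef] at this; linarith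
    obtain ⟨N, hN⟩ := (Metric.tendsto_atTop.mp hKL) (δ*ε/8) (by positivity)
    refine ⟨N, fun n hn => ?_⟩
    have h1 := l1_bound (μs n : Measure X) (ν : Measure X) (hac n) (hInt n) hε hε2
    have h2 := hN n hn
    rw [Real.dist_eq, sub_zero] at h2 ⊢
    rw [abs_of_nonneg (ha0 n)]
    have h3 : KL n < δ*ε/8 := lt_of_le_of_lt (le_abs_self _) h2
    have h4 : (4/ε) * KL n < (4/ε) * (δ*ε/8) :=
      mul_lt_mul_of_pos_left h3 (by positivity)
    have h5 : (4/ε) * (δ*ε/8) = δ/2 := by field_simp; ring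
    have : a n ≤ 2*ε + (4/ε) * KL n := h1
    linarith
  rw [ProbabilityMeasure.tendsto_iff_forall_integral_tendsto]
  intro h
  have key : ∀ n, |(∫ x, h x ∂(μs n : Measure X)) - ∫ x, h x ∂(ν : Measure X)| ≤ ‖h‖ * a n := by
    intro n
    set F : X → ℝ := fun x => ((μs n : Measure X).rnDeriv (ν : Measure X) x).toReal with hFdef
    have hint1 : Integrable (fun x => F x • h x) (ν : Measure X) :=
      (integrable_rnDeriv_smul_iff (hac n)).mpr (h.integrable _)
    have hint2 : Integrable (fun x => h x) (ν : Measure X) := h.integrable _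
    have hch : ∫ x, F x • h x ∂(ν : Measure X) = ∫ x, h x ∂(μs n : Measure X) :=
      integral_rnDeriv_smul (hac n)
    rw [← hch, ← integral_sub hint1 hint2]
    have habs : Integrable (fun x => |F x - 1|) (ν : Measure X) :=
      (Measure.integrable_toReal_rnDeriv.sub (integrable_const 1)).abs
    calc |∫ x, (F x • h x - h x) ∂(ν : Measure X)|
        ≤ ∫ x, |F x • h x - h x| ∂(ν : Measure X) := by
          have := norm_integral_le_integral_norm (μ := (ν : Measure X))
            (fun x => F x • h x - h x)
          simpa [Real.norm_eq_abs] using this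
      _ ≤ ∫ x, ‖h‖ * |F x - 1| ∂(ν : Measure X) := by
          apply integral_mono ((hint1.sub hint2).abs) (habs.const_mul ‖h‖)
          intro x
          show |F x • h x - h x| ≤ ‖h‖ * |F x - 1|
          have heq : F x • h x - h x = (F x - 1) * h x := by
            simp only [smul_eq_mul]; ring
          rw [heq, abs_mul, mul_comm]
          exact mul_le_mul_of_nonneg_right (h.norm_coe_le_norm x) (abs_nonneg _)
      _ = ‖h‖ * a n := by rw [integral_const_mul]
  rw [tendsto_iff_dist_tendsto_zero]
  have hb : ∀ n, dist (∫ x, h x ∂(μs n : Measure X)) (∫ x, h x ∂(ν : Measure X)) ≤ ‖h‖ * a n :=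
    fun n => by rw [Real.dist_eq]; exact key n
  exact squeeze_zero (fun n => dist_nonneg) hb (by simpa using haT.const_mul ‖h‖)


lemma exists_t (μ0 : ProbabilityMeasure X) (E : ProbabilityMeasure X → EReal)
    (hEbot : ∀ μ, E μ ≠ ⊥) (hElsc : LowerSemicontinuous E) (hEconv : EConvex E)
    {e0 : ℝ} (he0 : E μ0 = (e0 : EReal)) (μ : ProbabilityMeasure X) {e1 e : ℝ}
    (hμE : E μ = (e1 : EReal)) (h1 : e1 ≤ e) (h2 : e ≤ e0) :
    ∃ t, 0 ≤ t ∧ t ≤ 1 ∧ E (pmAffine μ μ0 t) = (e : EReal) := by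
  set S : Set ℝ := {t : ℝ | t ∈ Icc (0:ℝ) 1 ∧ E (pmAffine μ μ0 t) ≤ (e : EReal)} with hSdef
  have hSclosed : IsClosed S := sublevel_closed μ μ0 E hElsc _
  have hS0 : (0:ℝ) ∈ S := by
    refine ⟨⟨le_rfl, zero_le_one⟩, ?_⟩
    rw [pmAffine_zero, hμE]
    exact EReal.coe_le_coe_iff.mpr h1
  have hSne : S.Nonempty := ⟨0, hS0⟩
  have hSbdd : BddAbove S := ⟨1, fun x hx => hx.1.2⟩
  set c := sSup S with hcdef
  have hcS : c ∈ S := hSclosed.csSup_mem hSne hSbdd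
  have hc0 : 0 ≤ c := hcS.1.1
  have hc1 : c ≤ 1 := hcS.1.2
  rcases hcS.2.lt_or_eq with hlt | heq
  swap
  · exact ⟨c, hc0, hc1, heq⟩
  -- strict case: derive contradiction
  exfalso
  have hne_bot : E (pmAffine μ μ0 c) ≠ ⊥ := hEbot _
  have hne_top : E (pmAffine μ μ0 c) ≠ ⊤ := (hlt.trans (EReal.coe_lt_top e)).ne
  set a := (E (pmAffine μ μ0 c)).toReal with hadef
  have hEa : E (pmAffine μ μ0 c) = (a : EReal) := (EReal.coe_toReal hne_top hne_bot).symm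
  have halt : a < e := EReal.coe_lt_coe_iff.mp (hEa ▸ hlt)
  have hae0 : a ≤ e0 := by linarith
  have hc1' : c < 1 := by
    rcases hc1.lt_or_eq with h | h
    · exact h
    · exfalso
      rw [h, pmAffine_one, he0] at hEa
      have : e0 = a := EReal.coe_eq_coe_iff.mp hEa
      linarith
  set r := (e - a) / (e0 - a + 1) with hrdef
  have hden : (0:ℝ) < e0 - a + 1 := by linarith
  have hr0 : 0 < r := div_pos (by linarith) hden
  have hr1 : r ≤ 1 := by
    rw [div_le_one hden]; linarith
  have hrmul : r * (e0 - a + 1) = e - a := div_mul_cancel₀ _ hden.ne'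
  set u := c + r * (1 - c) with hudef
  have hu0 : 0 ≤ u := by nlinarith
  have hu1 : u ≤ 1 := by nlinarith
  have hcu : c < u := by nlinarith
  have hcomp : pmAffine (pmAffine μ μ0 c) μ0 r = pmAffine μ μ0 u :=
    pmAffine_comp μ μ0 hc0 hc1 hr0.le hr1
  have hconv := hEconv (pmAffine μ μ0 c) μ0 r hr0.le hr1
  rw [hcomp, hEa, he0] at hconv
  have hconv' : E (pmAffine μ μ0 u) ≤ (((1 - r) * a + r * e0 : ℝ) : EReal) := by
    refine hconv.trans_eq ?_
    rw [← EReal.coe_mul, ← EReal.coe_mul, ← EReal.coe_add]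
  have hval : (1 - r) * a + r * e0 ≤ e := by nlinarith
  have huS : u ∈ S := by
    refine ⟨⟨hu0, hu1⟩, hconv'.trans (EReal.coe_le_coe_iff.mpr hval)⟩
  have : u ≤ c := le_csSup hSbdd huS
  linarith

end Statement0Aux

/-- If `E` is convex on `P(X)` and `e₀ := E(μ0) < ∞`, then the entropy
`S(e)` is increasing on `(-∞, e₀]`, strictly increasing on the subset of `(-∞, e₀]` where
`S(e) > -∞`, and for every `e ≤ e₀` one has `S(e) = sup { S(μ) : μ ∈ P(X), E(μ) ≤ e }`. -/
theorem statement0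
    {X : Type*} [TopologicalSpace X] [CompactSpace X] [T2Space X]
    [MeasurableSpace X] [BorelSpace X]
    (μ0 : ProbabilityMeasure X) (E : ProbabilityMeasure X → EReal)
    (hEbot : ∀ μ, E μ ≠ ⊥)
    (hElsc : LowerSemicontinuous E)
    (hEconv : EConvex E)
    (e0 : ℝ) (he0 : E μ0 = (e0 : EReal)) :
    MonotoneOn (Sent μ0 E) (Iic e0) ∧
    StrictMonoOn (Sent μ0 E) {e : ℝ | e ≤ e0 ∧ ⊥ < Sent μ0 E e} ∧
    ∀ e : ℝ, e ≤ e0 →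
      Sent μ0 E e = sSup {s : EReal | ∃ μ : ProbabilityMeasure X,
        E μ ≤ (e : EReal) ∧ s = Sm (μ0 : Measure X) (μ : Measure X)} := by
  classical
  open Statement0Aux in
  -- basic decomposition of non-bot entropy
  have hSm_cases : ∀ μ : ProbabilityMeasure X, Sm (μ0 : Measure X) (μ : Measure X) ≠ ⊥ →
      ((μ : Measure X) ≪ (μ0 : Measure X)) ∧
      Integrable (llr (μ : Measure X) (μ0 : Measure X)) (μ : Measure X) ∧
      Sm (μ0 : Measure X) (μ : Measure X) =
        ((-(∫ x, llr (μ : Measure X) (μ0 : Measure X) x ∂(μ : Measure X)) : ℝ) : EReal) := by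
    intro μ h
    rw [Sm_eq] at h ⊢
    by_cases hc : (μ : Measure X) ≪ (μ0 : Measure X) ∧
        Integrable (llr (μ : Measure X) (μ0 : Measure X)) (μ : Measure X)
    · exact ⟨hc.1, hc.2, if_pos hc⟩
    · exact absurd (if_neg hc) h
  have hSm_nonpos : ∀ μ : ProbabilityMeasure X, Sm (μ0 : Measure X) (μ : Measure X) ≤ 0 := by
    intro μ
    by_cases h : Sm (μ0 : Measure X) (μ : Measure X) = ⊥
    · rw [h]; exact bot_le
    · obtain ⟨hac, hint, heq⟩ := hSm_cases μ h
      rw [heq]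
      have := kl_nonneg (μ : Measure X) (μ0 : Measure X) hac hint
      have h2 : (-(∫ x, llr (μ : Measure X) (μ0 : Measure X) x ∂(μ : Measure X)) : ℝ) ≤ 0 := by
        linarith
      exact EReal.coe_nonpos.mpr h2
  have hSent_nonpos : ∀ e : ℝ, Sent μ0 E e ≤ 0 := by
    intro e
    apply sSup_le
    rintro s ⟨μ, -, rfl⟩
    exact hSm_nonpos μ
  -- key quantitative lemma
  have hkey : ∀ (e1 e : ℝ), e1 ≤ e → e ≤ e0 → ∀ μ : ProbabilityMeasure X,
      E μ = (e1 : EReal) → Sm (μ0 : Measure X) (μ : Measure X) ≠ ⊥ →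
      ∃ t, 0 ≤ t ∧ t ≤ 1 ∧ e ≤ (1 - t) * e1 + t * e0 ∧
        ((1 - t : ℝ) : EReal) * Sm (μ0 : Measure X) (μ : Measure X) ≤ Sent μ0 E e := by
    intro e1 e h1 h2 μ hμE hbot
    obtain ⟨hac, hint, hSmeq⟩ := hSm_cases μ hbot
    obtain ⟨t, ht0, ht1, hte⟩ := exists_t μ0 E hEbot hElsc hEconv he0 μ hμE h1 h2
    set m := pmAffine μ μ0 t with hmdef
    have hm_coe : (m : Measure X) =
        ENNReal.ofReal (1 - t) • (μ : Measure X) + ENNReal.ofReal t • (μ0 : Measure X) :=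
      pmAffine_coe μ μ0 ht0 ht1
    obtain ⟨hmac, hmint, hmle⟩ :=
      mix_lemma (μ : Measure X) (μ0 : Measure X) hac hint ht0 ht1 (m : Measure X) hm_coe
    have hconv := hEconv μ μ0 t ht0 ht1
    rw [hte, hμE, he0] at hconv
    have he_le : e ≤ (1 - t) * e1 + t * e0 := by
      have : ((e : ℝ) : EReal) ≤ (((1 - t) * e1 + t * e0 : ℝ) : EReal) := by
        refine hconv.trans_eq ?_
        rw [← EReal.coe_mul, ← EReal.coe_mul, ← EReal.coe_add]
      exact EReal.coe_le_coe_iff.mp this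
    have hSm_m : Sm (μ0 : Measure X) (m : Measure X) =
        ((-(∫ x, llr (m : Measure X) (μ0 : Measure X) x ∂(m : Measure X)) : ℝ) : EReal) := by
      rw [Sm_eq, if_pos ⟨hmac, hmint⟩]
    have hmem : Sm (μ0 : Measure X) (m : Measure X) ∈
        {s : EReal | ∃ μ' : ProbabilityMeasure X,
          E μ' = (e : EReal) ∧ s = Sm (μ0 : Measure X) (μ' : Measure X)} := ⟨m, hte, rfl⟩
    refine ⟨t, ht0, ht1, he_le, ?_⟩
    calc ((1 - t : ℝ) : EReal) * Sm (μ0 : Measure X) (μ : Measure X)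
        = (((1 - t) * (-(∫ x, llr (μ : Measure X) (μ0 : Measure X) x ∂(μ : Measure X))) : ℝ)
            : EReal) := by rw [hSmeq, ← EReal.coe_mul]
      _ ≤ ((-(∫ x, llr (m : Measure X) (μ0 : Measure X) x ∂(m : Measure X)) : ℝ) : EReal) := by
          apply EReal.coe_le_coe_iff.mpr
          linarith
      _ = Sm (μ0 : Measure X) (m : Measure X) := hSm_m.symm
      _ ≤ Sent μ0 E e := le_sSup hmem
  -- the comparison lemma
  have hle_Sent : ∀ e : ℝ, e ≤ e0 → ∀ μ : ProbabilityMeasure X, E μ ≤ (e : EReal) →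
      Sm (μ0 : Measure X) (μ : Measure X) ≤ Sent μ0 E e := by
    intro e he μ hμ
    by_cases hbot : Sm (μ0 : Measure X) (μ : Measure X) = ⊥
    · rw [hbot]; exact bot_le
    · have htop : E μ ≠ ⊤ := fun h => by
        rw [h] at hμ
        exact absurd hμ (by simp)
      set e1 := (E μ).toReal with he1def
      have hμE : E μ = (e1 : EReal) := (EReal.coe_toReal htop (hEbot μ)).symm
      have h1 : e1 ≤ e := EReal.coe_le_coe_iff.mp (hμE ▸ hμ)
      obtain ⟨t, ht0, ht1, -, hSle⟩ := hkey e1 e h1 he μ hμE hbot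
      obtain ⟨hac, hint, hSmeq⟩ := hSm_cases μ hbot
      have hI : 0 ≤ ∫ x, llr (μ : Measure X) (μ0 : Measure X) x ∂(μ : Measure X) :=
        kl_nonneg _ _ hac hint
      calc Sm (μ0 : Measure X) (μ : Measure X)
          = ((-(∫ x, llr (μ : Measure X) (μ0 : Measure X) x ∂(μ : Measure X)) : ℝ) : EReal) :=
            hSmeq
        _ ≤ (((1 - t) * (-(∫ x, llr (μ : Measure X) (μ0 : Measure X) x ∂(μ : Measure X))) : ℝ)
              : EReal) := by
            apply EReal.coe_le_coe_iff.mpr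
            nlinarith
        _ = ((1 - t : ℝ) : EReal) * Sm (μ0 : Measure X) (μ : Measure X) := by
            rw [hSmeq, ← EReal.coe_mul]
        _ ≤ Sent μ0 E e := hSle
  -- Part 1: monotonicity
  have hmono : MonotoneOn (Sent μ0 E) (Iic e0) := by
    intro x hx y hy hxy
    apply sSup_le
    rintro s ⟨μ, hμ, rfl⟩
    exact hle_Sent y hy μ (by rw [hμ]; exact EReal.coe_le_coe_iff.mpr hxy)
  -- negativity below e0
  have hneg : ∀ e1 : ℝ, e1 < e0 → ⊥ < Sent μ0 E e1 → Sent μ0 E e1 < 0 := by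
    intro e1 hlt hbot
    rcases lt_or_ge (Sent μ0 E e1) 0 with h | h
    · exact h
    exfalso
    have hzero : Sent μ0 E e1 = 0 := le_antisymm (hSent_nonpos e1) h
    have hseq : ∀ n : ℕ, ∃ μ : ProbabilityMeasure X, E μ = (e1 : EReal) ∧
        ((-(1/(n+1)) : ℝ) : EReal) < Sm (μ0 : Measure X) (μ : Measure X) := by
      intro n
      have hlt' : ((-(1/(n+1)) : ℝ) : EReal) < Sent μ0 E e1 := by
        rw [hzero]
        have hp : (0:ℝ) < 1/((n:ℝ)+1) := by positivity
        exact EReal.coe_neg'.mpr (by linarith)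
      rw [Sent] at hlt'
      obtain ⟨s, hs, hlt''⟩ := lt_sSup_iff.mp hlt'
      obtain ⟨μ, hμ, rfl⟩ := hs
      exact ⟨μ, hμ, hlt''⟩
    choose μs hEs hSgt using hseq
    have hbots : ∀ n, Sm (μ0 : Measure X) (μs n : Measure X) ≠ ⊥ :=
      fun n => ((EReal.bot_lt_coe _).trans (hSgt n)).ne'
    have hacs := fun n => (hSm_cases (μs n) (hbots n)).1
    have hints := fun n => (hSm_cases (μs n) (hbots n)).2.1
    have hSmeqs := fun n => (hSm_cases (μs n) (hbots n)).2.2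
    set KL : ℕ → ℝ :=
      fun n => ∫ x, llr (μs n : Measure X) (μ0 : Measure X) x ∂(μs n : Measure X) with hKLdef
    have hKL0 : ∀ n, 0 ≤ KL n := fun n => kl_nonneg _ _ (hacs n) (hints n)
    have hKLlt : ∀ n, KL n < 1/(n+1) := by
      intro n
      have := hSgt n
      rw [hSmeqs n] at this
      have h2 : (-(1/((n:ℝ)+1)) : ℝ) < -(KL n) := EReal.coe_lt_coe_iff.mp this
      linarith
    have hKLt : Tendsto KL atTop (𝓝 0) := by
      apply squeeze_zero hKL0 (fun n => (hKLlt n).le)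
      exact tendsto_one_div_add_atTop_nhds_zero_nat
    have htend := tendsto_of_kl μ0 μs hacs hints hKL0 hKLt
    have hlsc := hElsc μ0 (e1 : EReal) (by show (e1 : EReal) < E μ0; rw [he0]; exact EReal.coe_lt_coe_iff.mpr hlt)
    have hev := htend.eventually hlsc
    obtain ⟨n, hn⟩ := hev.exists
    rw [hEs n] at hn
    exact lt_irrefl _ hn
  -- Part 2: strict monotonicity
  have hstrict : StrictMonoOn (Sent μ0 E) {e : ℝ | e ≤ e0 ∧ ⊥ < Sent μ0 E e} := by
    rintro a ⟨ha0, habot⟩ b ⟨hb0, -⟩ hab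
    have haneg : Sent μ0 E a < 0 := hneg a (lt_of_lt_of_le hab hb0) habot
    have ha_top : Sent μ0 E a ≠ ⊤ := (haneg.trans (by norm_num : (0:EReal) < ⊤)).ne
    set s1 := (Sent μ0 E a).toReal with hs1def
    have hSa : Sent μ0 E a = (s1 : EReal) := (EReal.coe_toReal ha_top habot.ne').symm
    have hs1neg : s1 < 0 := by
      have := haneg
      rw [hSa] at this
      exact EReal.coe_neg'.mp this
    have he0a : 0 < e0 - a := by linarith
    set τ := (b - a) / (e0 - a) with hτdef
    have hτ0 : 0 < τ := div_pos (by linarith) he0a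
    have hτ1 : τ ≤ 1 := by rw [div_le_one he0a]; linarith
    have hτmul : τ * (e0 - a) = b - a := div_mul_cancel₀ _ he0a.ne'
    -- main estimate
    have hclaim : ∀ ε : ℝ, 0 < ε → (((1 - τ) * (s1 - ε) : ℝ) : EReal) ≤ Sent μ0 E b := by
      intro ε hε
      have hlt' : ((s1 - ε : ℝ) : EReal) < Sent μ0 E a := by
        rw [hSa]
        exact EReal.coe_lt_coe_iff.mpr (by linarith)
      rw [Sent] at hlt'
      obtain ⟨s, hs, hlt''⟩ := lt_sSup_iff.mp hlt'
      obtain ⟨μ, hμE, rfl⟩ := hs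
      have hbotμ : Sm (μ0 : Measure X) (μ : Measure X) ≠ ⊥ :=
        ((EReal.bot_lt_coe _).trans hlt'').ne'
      obtain ⟨hac, hint, hSmeq⟩ := hSm_cases μ hbotμ
      set I := ∫ x, llr (μ : Measure X) (μ0 : Measure X) x ∂(μ : Measure X) with hIdef
      have hI0 : 0 ≤ I := kl_nonneg _ _ hac hint
      have hIgt : s1 - ε < -I := by
        rw [hSmeq] at hlt''
        exact EReal.coe_lt_coe_iff.mp hlt''
      obtain ⟨t, ht0, ht1, hble, hSle⟩ := hkey a b hab.le hb0 μ hμE hbotμ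
      have htτ : τ ≤ t := by
        rw [div_le_iff₀ he0a]
        nlinarith
      calc (((1 - τ) * (s1 - ε) : ℝ) : EReal)
          ≤ (((1 - t) * (-I) : ℝ) : EReal) := by
            apply EReal.coe_le_coe_iff.mpr
            nlinarith
        _ = ((1 - t : ℝ) : EReal) * Sm (μ0 : Measure X) (μ : Measure X) := by
            rw [hSmeq, ← EReal.coe_mul]
        _ ≤ Sent μ0 E b := hSle
    by_cases hbtop : Sent μ0 E b = ⊤
    · rw [hbtop, hSa]
      exact EReal.coe_lt_top s1
    have hbbot : Sent μ0 E b ≠ ⊥ := by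
      intro h
      have := hclaim 1 one_pos
      rw [h] at this
      exact absurd (le_bot_iff.mp this) (EReal.coe_ne_bot _)
    set s2 := (Sent μ0 E b).toReal with hs2def
    have hSb : Sent μ0 E b = (s2 : EReal) := (EReal.coe_toReal hbtop hbbot).symm
    have hs2ge : ∀ ε : ℝ, 0 < ε → (1 - τ) * (s1 - ε) ≤ s2 := by
      intro ε hε
      have := hclaim ε hε
      rw [hSb] at this
      exact EReal.coe_le_coe_iff.mp this
    have hfinal : (1 - τ) * s1 ≤ s2 := by
      by_contra hcon
      push_neg at hcon
      set ε := ((1 - τ) * s1 - s2) / (1 + (1 - τ)) with hεdef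
      have hd : (0:ℝ) < 1 + (1 - τ) := by linarith
      have hε : 0 < ε := div_pos (by linarith) hd
      have hεmul : ε * (1 + (1 - τ)) = (1 - τ) * s1 - s2 := div_mul_cancel₀ _ hd.ne'
      have := hs2ge ε hε
      nlinarith
    rw [hSa, hSb]
    have : s1 < (1 - τ) * s1 := by nlinarith
    exact EReal.coe_lt_coe_iff.mpr (by linarith)
  refine ⟨hmono, hstrict, ?_⟩
  -- Part 3
  intro e he
  apply le_antisymm
  · apply sSup_le
    rintro s ⟨μ, hμ, rfl⟩
    exact le_sSup ⟨μ, le_of_eq hμ, rfl⟩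
  · apply sSup_le
    rintro s ⟨μ, hμ, rfl⟩
    exact hle_Sent e he μ hμ
end
end

section
/- Suppose that E is convex on P(X) and that e_0 := E(μ0) < ∞. Then the entropy S(e) is concave on (−∞, e_0]. -/
open MeasureTheory Filter Set Topology
open scoped Classical

noncomputable section

section AuxStatement9
open BoundedContinuousFunction
open scoped ENNReal NNReal
variable {X : Type*} [MeasurableSpace X]

lemma Sm_self (μ0 : Measure X) [IsProbabilityMeasure μ0] : Sm μ0 μ0 = 0 := by
  have h1 : (fun x => Real.log ((μ0.rnDeriv μ0 x).toReal)) =ᵐ[μ0] fun _ => (0:ℝ) := by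
    filter_upwards [Measure.rnDeriv_self μ0] with x hx
    simp [hx]
  have hint : Integrable (fun x => Real.log ((μ0.rnDeriv μ0 x).toReal)) μ0 :=
    (integrable_const (0:ℝ)).congr h1.symm
  rw [Sm, if_pos ⟨Measure.AbsolutelyContinuous.rfl, hint⟩, integral_congr_ae h1]
  simp

-- positivity & finiteness of rnDeriv a.e. μ
lemma rnDeriv_pos_fin (μ0 μ : Measure X) [SigmaFinite μ0] [IsFiniteMeasure μ] (hac : μ ≪ μ0) :
    ∀ᵐ x ∂μ, 0 < (μ.rnDeriv μ0 x).toReal := by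
  filter_upwards [Measure.rnDeriv_pos hac, hac.ae_le (Measure.rnDeriv_lt_top μ μ0)] with x h1 h2
  exact ENNReal.toReal_pos h1.ne' h2.ne

lemma integral_inv_rnDeriv_le_one (μ0 μ : Measure X) [IsProbabilityMeasure μ0]
    [IsFiniteMeasure μ] (hac : μ ≪ μ0) :
    Integrable (fun x => ((μ.rnDeriv μ0 x).toReal)⁻¹) μ ∧
      ∫ x, ((μ.rnDeriv μ0 x).toReal)⁻¹ ∂μ ≤ 1 := by
  have hmeas : Measurable fun x => ((μ.rnDeriv μ0 x).toReal)⁻¹ :=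
    (Measure.measurable_rnDeriv μ μ0).ennreal_toReal.inv
  have hlin : ∫⁻ x, ENNReal.ofReal (((μ.rnDeriv μ0 x).toReal)⁻¹) ∂μ ≤ 1 := by
    have h1 : ∫⁻ x, ENNReal.ofReal (((μ.rnDeriv μ0 x).toReal)⁻¹) ∂μ
        = ∫⁻ x, ENNReal.ofReal (((μ.rnDeriv μ0 x).toReal)⁻¹) * μ.rnDeriv μ0 x ∂μ0 := by
      rw [← lintegral_rnDeriv_mul hac (hmeas.ennreal_ofReal.aemeasurable)]
      simp_rw [mul_comm]
    rw [h1]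
    have h2 : ∀ x, ENNReal.ofReal (((μ.rnDeriv μ0 x).toReal)⁻¹) * μ.rnDeriv μ0 x ≤ 1 := by
      intro x
      rcases eq_or_ne (μ.rnDeriv μ0 x) 0 with h | h
      · simp [h]
      rcases eq_or_ne (μ.rnDeriv μ0 x) ⊤ with h' | h'
      · simp [h']
      · nth_rewrite 2 [← ENNReal.ofReal_toReal h']
        rw [← ENNReal.ofReal_mul (by positivity),
          inv_mul_cancel₀ (ENNReal.toReal_pos h h').ne']
        simp
    calc ∫⁻ x, ENNReal.ofReal (((μ.rnDeriv μ0 x).toReal)⁻¹) * μ.rnDeriv μ0 x ∂μ0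
        ≤ ∫⁻ _, 1 ∂μ0 := lintegral_mono h2
      _ = 1 := by simp
  have hint : Integrable (fun x => ((μ.rnDeriv μ0 x).toReal)⁻¹) μ := by
    refine ⟨hmeas.aestronglyMeasurable, ?_⟩
    rw [hasFiniteIntegral_iff_ofReal (Eventually.of_forall fun x => by positivity)]
    exact lt_of_le_of_lt hlin ENNReal.one_lt_top
  refine ⟨hint, ?_⟩
  rw [integral_eq_lintegral_of_nonneg_ae (Eventually.of_forall fun x => by positivity)
    hmeas.aestronglyMeasurable]
  calc (∫⁻ x, ENNReal.ofReal (((μ.rnDeriv μ0 x).toReal)⁻¹) ∂μ).toReal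
      ≤ (1 : ℝ≥0∞).toReal := ENNReal.toReal_mono ENNReal.one_ne_top hlin
    _ = 1 := by simp

lemma Sm_nonpos (μ0 μ : Measure X) [IsProbabilityMeasure μ0] [IsProbabilityMeasure μ] :
    Sm μ0 μ ≤ 0 := by
  rw [Sm]
  split_ifs with h
  · obtain ⟨hac, hint⟩ := h
    obtain ⟨hint1, hle1⟩ := integral_inv_rnDeriv_le_one μ0 μ hac
    have hmono : ∫ x, (1 - ((μ.rnDeriv μ0 x).toReal)⁻¹) ∂μ
        ≤ ∫ x, Real.log ((μ.rnDeriv μ0 x).toReal) ∂μ := by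
      refine integral_mono_ae ((integrable_const (1:ℝ)).sub hint1) hint ?_
      filter_upwards [rnDeriv_pos_fin μ0 μ hac] with x hx
      have := Real.log_le_sub_one_of_pos (inv_pos.mpr hx)
      rw [Real.log_inv] at this
      linarith
    have : (0:ℝ) ≤ ∫ x, Real.log ((μ.rnDeriv μ0 x).toReal) ∂μ := by
      have h2 : ∫ x, (1 - ((μ.rnDeriv μ0 x).toReal)⁻¹) ∂μ
          = 1 - ∫ x, ((μ.rnDeriv μ0 x).toReal)⁻¹ ∂μ := by
        rw [integral_sub (integrable_const _) hint1]; simp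
      linarith
    rw [show ((0:EReal)) = ((0:ℝ):EReal) by simp, EReal.coe_le_coe_iff]
    linarith
  · exact bot_le


lemma pmAffine_coe (μ ν : ProbabilityMeasure X) {t : ℝ} (h0 : 0 ≤ t) (h1 : t ≤ 1) :
    ((pmAffine μ ν t : ProbabilityMeasure X) : Measure X)
      = ENNReal.ofReal (1 - t) • (μ : Measure X) + ENNReal.ofReal t • (ν : Measure X) := by
  rw [pmAffine]; exact congrArg Subtype.val (dif_pos ⟨h0, h1⟩)

lemma mul_log_ge_sub_one {u : ℝ} (hu : 0 ≤ u) : u - 1 ≤ u * Real.log u := by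
  rcases eq_or_lt_of_le hu with h | h
  · simp [← h]
  · have h2 := Real.log_le_sub_one_of_pos (inv_pos.mpr h)
    rw [Real.log_inv] at h2
    have h3 : 1 - u⁻¹ ≤ Real.log u := by linarith
    calc u - 1 = u * (1 - u⁻¹) := by field_simp
      _ ≤ u * Real.log u := by nlinarith

lemma Sm_concave (μ0 μ ν : ProbabilityMeasure X) {s : ℝ} (h0 : 0 ≤ s) (h1 : s ≤ 1)
    (hμ : Sm (μ0 : Measure X) (μ : Measure X) ≠ ⊥)
    (hν : Sm (μ0 : Measure X) (ν : Measure X) ≠ ⊥) :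
    ((1 - s : ℝ) : EReal) * Sm (μ0 : Measure X) (μ : Measure X)
      + ((s : ℝ) : EReal) * Sm (μ0 : Measure X) (ν : Measure X)
      ≤ Sm (μ0 : Measure X) ((pmAffine μ ν s : ProbabilityMeasure X) : Measure X) := by
  set m0 : Measure X := (μ0 : Measure X)
  set m : Measure X := (μ : Measure X)
  set n : Measure X := (ν : Measure X)
  have Cμ : m ≪ m0 ∧ Integrable (fun x => Real.log ((m.rnDeriv m0 x).toReal)) m := by
    by_contra h; exact hμ (if_neg h)
  have Cν : n ≪ m0 ∧ Integrable (fun x => Real.log ((n.rnDeriv m0 x).toReal)) n := by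
    by_contra h; exact hν (if_neg h)
  obtain ⟨hacμ, hintμ⟩ := Cμ
  obtain ⟨hacν, hintν⟩ := Cν
  set c1 : ℝ≥0∞ := ENNReal.ofReal (1 - s) with hc1
  set c2 : ℝ≥0∞ := ENNReal.ofReal s with hc2
  have hc1t : c1 ≠ ∞ := ENNReal.ofReal_ne_top
  have hc2t : c2 ≠ ∞ := ENNReal.ofReal_ne_top
  set κ : Measure X := c1 • m + c2 • n with hκ
  have hκcoe : ((pmAffine μ ν s : ProbabilityMeasure X) : Measure X) = κ := pmAffine_coe μ ν h0 h1
  haveI hfin1 : IsFiniteMeasure (c1 • m) := by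
    refine ⟨?_⟩
    simp only [Measure.coe_smul, Pi.smul_apply, smul_eq_mul, measure_univ, mul_one]
    exact hc1t.lt_top
  haveI hfin2 : IsFiniteMeasure (c2 • n) := by
    refine ⟨?_⟩
    simp only [Measure.coe_smul, Pi.smul_apply, smul_eq_mul, measure_univ, mul_one]
    exact hc2t.lt_top
  haveI hfinκ : IsFiniteMeasure κ := by rw [hκ]; infer_instance
  have hacκ : κ ≪ m0 := by
    intro t ht
    simp only [hκ, Measure.coe_add, Pi.add_apply, Measure.coe_smul, Pi.smul_apply,
      smul_eq_mul, hacμ ht, hacν ht, mul_zero, add_zero]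
  set F : X → ℝ := fun x => (m.rnDeriv m0 x).toReal with hF
  set G : X → ℝ := fun x => (n.rnDeriv m0 x).toReal with hG
  set H : X → ℝ := fun x => (1 - s) * F x + s * G x with hH
  have hFmeas : Measurable F := (Measure.measurable_rnDeriv m m0).ennreal_toReal
  have hGmeas : Measurable G := (Measure.measurable_rnDeriv n m0).ennreal_toReal
  have hHmeas : Measurable H := (hFmeas.const_mul _).add (hGmeas.const_mul _)
  have hFnn : ∀ x, 0 ≤ F x := fun x => ENNReal.toReal_nonneg
  have hGnn : ∀ x, 0 ≤ G x := fun x => ENNReal.toReal_nonneg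
  have hHnn : ∀ x, 0 ≤ H x := fun x => by
    have := hFnn x; have := hGnn x
    simp only [hH]; nlinarith
  -- rnDeriv of κ
  have hrn : κ.rnDeriv m0 =ᵐ[m0] fun x => c1 * m.rnDeriv m0 x + c2 * n.rnDeriv m0 x := by
    refine (Measure.rnDeriv_add' (c1 • m) (c2 • n) m0).trans ?_
    filter_upwards [Measure.rnDeriv_smul_left_of_ne_top' m m0 hc1t,
      Measure.rnDeriv_smul_left_of_ne_top' n m0 hc2t] with x hx1 hx2
    simp only [Pi.add_apply, hx1, hx2, Pi.smul_apply, smul_eq_mul]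
  have key0 : (fun x => (κ.rnDeriv m0 x).toReal) =ᵐ[m0] H := by
    filter_upwards [hrn, Measure.rnDeriv_lt_top m m0, Measure.rnDeriv_lt_top n m0]
      with x hx hm hn
    rw [hx]
    rw [ENNReal.toReal_add (ENNReal.mul_ne_top hc1t hm.ne) (ENNReal.mul_ne_top hc2t hn.ne),
      ENNReal.toReal_mul, ENNReal.toReal_mul, hc1, hc2,
      ENNReal.toReal_ofReal (by linarith), ENNReal.toReal_ofReal h0]
  have keyκ : (fun x => (κ.rnDeriv m0 x).toReal) =ᵐ[κ] H := hacκ.ae_le key0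
  -- integrability of x log x compositions
  have iφF : Integrable (fun x => F x * Real.log (F x)) m0 := by
    have := (integrable_rnDeriv_smul_iff hacμ
      (f := fun x => Real.log (F x))).mpr hintμ
    simpa [smul_eq_mul] using this
  have iφG : Integrable (fun x => G x * Real.log (G x)) m0 := by
    have := (integrable_rnDeriv_smul_iff hacν
      (f := fun x => Real.log (G x))).mpr hintν
    simpa [smul_eq_mul] using this
  have hconv : ∀ x, H x * Real.log (H x)
      ≤ (1 - s) * (F x * Real.log (F x)) + s * (G x * Real.log (G x)) := by
    intro x
    have := Real.convexOn_mul_log.2 (mem_Ici.mpr (hFnn x)) (mem_Ici.mpr (hGnn x))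
      (by linarith : (0:ℝ) ≤ 1 - s) h0 (by ring)
    simpa [smul_eq_mul] using this
  have iφH : Integrable (fun x => H x * Real.log (H x)) m0 := by
    have hmaj : Integrable
        (fun x => (1 - s) * (F x * Real.log (F x)) + s * (G x * Real.log (G x)) + 1) m0 :=
      ((iφF.const_mul _).add (iφG.const_mul _)).add (integrable_const 1)
    have h2 : Integrable (fun x => H x * Real.log (H x) + 1) m0 := by
      refine hmaj.mono' ((hHmeas.mul (Real.measurable_log.comp hHmeas)).add
        measurable_const).aestronglyMeasurable (Eventually.of_forall fun x => ?_)
      have hl : -1 ≤ H x * Real.log (H x) := by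
        have h5 := mul_log_ge_sub_one (hHnn x); have h6 := hHnn x; linarith
      rw [Real.norm_eq_abs, abs_of_nonneg (by linarith)]
      have := hconv x
      linarith
    exact (h2.sub (integrable_const 1)).congr (Eventually.of_forall fun x => by simp)
  -- the condition for κ holds
  have hintκ' : Integrable (fun x => Real.log (H x)) κ := by
    rw [← integrable_rnDeriv_smul_iff hacκ]
    refine iφH.congr ?_
    filter_upwards [key0] with x hx
    simp [hx, smul_eq_mul]
  have hintκ : Integrable (fun x => Real.log ((κ.rnDeriv m0 x).toReal)) κ := by
    refine hintκ'.congr ?_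
    filter_upwards [keyκ] with x hx
    rw [hx]
  -- the integral identity/inequality
  have hIμ : ∫ x, F x * Real.log (F x) ∂m0 = ∫ x, Real.log ((m.rnDeriv m0 x).toReal) ∂m := by
    rw [← integral_rnDeriv_smul hacμ (f := fun x => Real.log (F x))]
    simp [smul_eq_mul, hF]
  have hIν : ∫ x, G x * Real.log (G x) ∂m0 = ∫ x, Real.log ((n.rnDeriv m0 x).toReal) ∂n := by
    rw [← integral_rnDeriv_smul hacν (f := fun x => Real.log (G x))]
    simp [smul_eq_mul, hG]
  have hIκ : ∫ x, Real.log ((κ.rnDeriv m0 x).toReal) ∂κ = ∫ x, H x * Real.log (H x) ∂m0 := by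
    rw [integral_congr_ae (g := fun x => Real.log (H x)) (by filter_upwards [keyκ] with x hx; rw [hx]),
      ← integral_rnDeriv_smul hacκ (f := fun x => Real.log (H x))]
    refine integral_congr_ae ?_
    filter_upwards [key0] with x hx
    simp [hx, smul_eq_mul]
  have hineq : ∫ x, H x * Real.log (H x) ∂m0
      ≤ (1 - s) * ∫ x, F x * Real.log (F x) ∂m0 + s * ∫ x, G x * Real.log (G x) ∂m0 := by
    calc ∫ x, H x * Real.log (H x) ∂m0
        ≤ ∫ x, ((1 - s) * (F x * Real.log (F x)) + s * (G x * Real.log (G x))) ∂m0 :=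
          integral_mono iφH ((iφF.const_mul _).add (iφG.const_mul _)) hconv
      _ = (1 - s) * ∫ x, F x * Real.log (F x) ∂m0 + s * ∫ x, G x * Real.log (G x) ∂m0 := by
          rw [integral_add (iφF.const_mul _) (iφG.const_mul _), integral_const_mul,
            integral_const_mul]
  -- wrap up in EReal
  rw [hκcoe, Sm, Sm, Sm, if_pos ⟨hacμ, hintμ⟩, if_pos ⟨hacν, hintν⟩, if_pos ⟨hacκ, hintκ⟩]
  rw [← EReal.coe_mul, ← EReal.coe_mul, ← EReal.coe_add, EReal.coe_le_coe_iff]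
  rw [hIκ]
  rw [hIμ, hIν] at hineq
  linarith

lemma pmAffine_comp (μ ν : ProbabilityMeasure X) {u v t : ℝ}
    (hu0 : 0 ≤ u) (hu1 : u ≤ 1) (hv0 : 0 ≤ v) (hv1 : v ≤ 1) (ht0 : 0 ≤ t) (ht1 : t ≤ 1) :
    pmAffine (pmAffine μ ν u) (pmAffine μ ν v) t = pmAffine μ ν ((1 - t) * u + t * v) := by
  have hc0 : 0 ≤ (1 - t) * u + t * v := by nlinarith
  have hc1 : (1 - t) * u + t * v ≤ 1 := by nlinarith
  apply ProbabilityMeasure.toMeasure_injective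
  rw [pmAffine_coe _ _ ht0 ht1, pmAffine_coe _ _ hu0 hu1, pmAffine_coe _ _ hv0 hv1,
    pmAffine_coe _ _ hc0 hc1]
  rw [smul_add, smul_add, smul_smul, smul_smul, smul_smul, smul_smul]
  rw [← ENNReal.ofReal_mul (by linarith), ← ENNReal.ofReal_mul (by linarith),
    ← ENNReal.ofReal_mul ht0, ← ENNReal.ofReal_mul ht0]
  rw [add_add_add_comm, ← add_smul, ← add_smul,
    ← ENNReal.ofReal_add (by nlinarith) (by nlinarith),
    ← ENNReal.ofReal_add (by nlinarith) (by nlinarith)]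
  have e1 : (1 - t) * (1 - u) + t * (1 - v) = 1 - ((1 - t) * u + t * v) := by ring
  rw [e1]

section Top
variable [TopologicalSpace X] [OpensMeasurableSpace X]

lemma integral_pmAffine (μ ν : ProbabilityMeasure X) (f : X →ᵇ ℝ) {s : ℝ}
    (h0 : 0 ≤ s) (h1 : s ≤ 1) :
    ∫ x, f x ∂((pmAffine μ ν s : ProbabilityMeasure X) : Measure X)
      = (1 - s) * ∫ x, f x ∂(μ : Measure X) + s * ∫ x, f x ∂(ν : Measure X) := by
  haveI h1' : IsFiniteMeasure (ENNReal.ofReal (1 - s) • (μ : Measure X)) := by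
    refine ⟨?_⟩
    simp only [Measure.coe_smul, Pi.smul_apply, smul_eq_mul, measure_univ, mul_one]
    exact ENNReal.ofReal_lt_top
  haveI h2' : IsFiniteMeasure (ENNReal.ofReal s • (ν : Measure X)) := by
    refine ⟨?_⟩
    simp only [Measure.coe_smul, Pi.smul_apply, smul_eq_mul, measure_univ, mul_one]
    exact ENNReal.ofReal_lt_top
  rw [pmAffine_coe μ ν h0 h1, integral_add_measure (f.integrable _) (f.integrable _),
    integral_smul_measure, integral_smul_measure, ENNReal.toReal_ofReal (by linarith),
    ENNReal.toReal_ofReal h0, smul_eq_mul, smul_eq_mul]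

lemma pmAffine_tendsto_one (μ ν : ProbabilityMeasure X) :
    Tendsto (fun s => pmAffine μ ν s) (𝓝[Icc (0:ℝ) 1] 1) (𝓝 ν) := by
  rw [ProbabilityMeasure.tendsto_iff_forall_integral_tendsto]
  intro f
  have hbase : Tendsto (fun s : ℝ => (1 - s) * ∫ x, f x ∂(μ : Measure X)
      + s * ∫ x, f x ∂(ν : Measure X)) (𝓝[Icc (0:ℝ) 1] 1)
      (𝓝 (∫ x, f x ∂(ν : Measure X))) := by
    have hcont : Continuous (fun s : ℝ => (1 - s) * ∫ x, f x ∂(μ : Measure X)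
        + s * ∫ x, f x ∂(ν : Measure X)) := by continuity
    have := (hcont.tendsto 1).mono_left (nhdsWithin_le_nhds (s := Icc (0:ℝ) 1))
    simpa using this
  refine Tendsto.congr' ?_ hbase
  filter_upwards [self_mem_nhdsWithin] with s hs
  exact (integral_pmAffine μ ν f hs.1 hs.2).symm

end Top

end AuxStatement9

/-- If `E` is convex on `P(X)` and `e₀ := E(μ0) < ∞`, then the entropy
`S(e)` is concave on `(-∞, e₀]`. -/
theorem statement9
    {X : Type*} [TopologicalSpace X] [CompactSpace X] [T2Space X]
    [MeasurableSpace X] [BorelSpace X]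
    (μ0 : ProbabilityMeasure X) (E : ProbabilityMeasure X → EReal)
    (hEbot : ∀ μ, E μ ≠ ⊥)
    (hElsc : LowerSemicontinuous E)
    (hEconv : EConvex E)
    (e0 : ℝ) (he0 : E μ0 = (e0 : EReal)) :
    ConcOn (Iic e0) (Sent μ0 E) := by
  intro x hx y hy t ht0 ht1
  rcases eq_or_lt_of_le ht0 with h0 | ht0'
  · rw [← h0, show ((0:ℝ):EReal) = (0:EReal) from rfl, zero_mul, zero_add,
      show ((1 - 0 : ℝ):EReal) = (1:EReal) by norm_num,
      one_mul, show (0 * x + (1 - 0) * y : ℝ) = y by ring]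
  rcases eq_or_lt_of_le ht1 with h1 | ht1'
  · rw [h1, show ((1:ℝ):EReal) = (1:EReal) from rfl, one_mul,
      show ((1 - 1 : ℝ):EReal) = (0:EReal) by norm_num, zero_mul, add_zero,
      show (1 * x + (1 - 1) * y : ℝ) = x by ring]
  by_cases hbx : Sent μ0 E x = ⊥
  · rw [hbx, EReal.coe_mul_bot_of_pos ht0', EReal.bot_add]; exact bot_le
  by_cases hby : Sent μ0 E y = ⊥
  · rw [hby, EReal.coe_mul_bot_of_pos (by linarith : (0:ℝ) < 1 - t), EReal.add_bot]
    exact bot_le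
  have hSle0 : ∀ e : ℝ, Sent μ0 E e ≤ 0 := by
    intro e
    refine sSup_le ?_
    rintro s ⟨μ, -, rfl⟩
    exact Sm_nonpos _ _
  have hxt : Sent μ0 E x ≠ ⊤ := (lt_of_le_of_lt (hSle0 x) (EReal.coe_lt_top 0)).ne
  have hyt : Sent μ0 E y ≠ ⊤ := (lt_of_le_of_lt (hSle0 y) (EReal.coe_lt_top 0)).ne
  set a := (Sent μ0 E x).toReal with ha
  set b := (Sent μ0 E y).toReal with hb
  have hax : Sent μ0 E x = (a : EReal) := (EReal.coe_toReal hxt hbx).symm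
  have hbyy : Sent μ0 E y = (b : EReal) := (EReal.coe_toReal hyt hby).symm
  set z := t * x + (1 - t) * y with hz
  have hxle : x ≤ e0 := hx
  have hyle : y ≤ e0 := hy
  have hzle : z ≤ e0 := by rw [hz]; nlinarith
  -- the key claim
  have key : ∀ a' b' : ℝ, (a' : EReal) < Sent μ0 E x → (b' : EReal) < Sent μ0 E y →
      ((t * a' + (1 - t) * b' : ℝ) : EReal) ≤ Sent μ0 E z := by
    intro a' b' ha' hb'
    rw [Sent] at ha' hb'
    obtain ⟨sa, hsamem, hsa⟩ := lt_sSup_iff.mp ha'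
    obtain ⟨μ, hEμ, rfl⟩ := hsamem
    obtain ⟨sb, hsbmem, hsb⟩ := lt_sSup_iff.mp hb'
    obtain ⟨ν, hEν, rfl⟩ := hsbmem
    have hSμbot : Sm (μ0 : Measure X) (μ : Measure X) ≠ ⊥ := fun h => by
      rw [h] at hsa; exact not_lt_bot hsa
    have hSνbot : Sm (μ0 : Measure X) (ν : Measure X) ≠ ⊥ := fun h => by
      rw [h] at hsb; exact not_lt_bot hsb
    have hSμtop : Sm (μ0 : Measure X) (μ : Measure X) ≠ ⊤ :=
      (lt_of_le_of_lt (Sm_nonpos _ _) (EReal.coe_lt_top 0)).ne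
    have hSνtop : Sm (μ0 : Measure X) (ν : Measure X) ≠ ⊤ :=
      (lt_of_le_of_lt (Sm_nonpos _ _) (EReal.coe_lt_top 0)).ne
    set p := (Sm (μ0 : Measure X) (μ : Measure X)).toReal with hp
    set q := (Sm (μ0 : Measure X) (ν : Measure X)).toReal with hq
    have hpμ : Sm (μ0 : Measure X) (μ : Measure X) = (p : EReal) :=
      (EReal.coe_toReal hSμtop hSμbot).symm
    have hqν : Sm (μ0 : Measure X) (ν : Measure X) = (q : EReal) :=
      (EReal.coe_toReal hSνtop hSνbot).symm
    have hpa : a' < p := by rw [hpμ] at hsa; exact_mod_cast hsa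
    have hqb : b' < q := by rw [hqν] at hsb; exact_mod_cast hsb
    have hple : p ≤ 0 := by
      have := Sm_nonpos (μ0 : Measure X) (μ : Measure X); rw [hpμ] at this
      exact_mod_cast this
    have hqle : q ≤ 0 := by
      have := Sm_nonpos (μ0 : Measure X) (ν : Measure X); rw [hqν] at this
      exact_mod_cast this
    set lam := pmAffine μ ν (1 - t) with hlam
    have hcomb := Sm_concave μ0 μ ν (s := 1 - t) (by linarith) (by linarith) hSμbot hSνbot
    rw [show (1 - (1 - t) : ℝ) = t from by ring, hpμ, hqν, ← EReal.coe_mul, ← EReal.coe_mul,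
      ← EReal.coe_add] at hcomb
    have hlamnb : Sm (μ0 : Measure X) (lam : Measure X) ≠ ⊥ := fun h => by
      rw [h] at hcomb; exact not_lt_bot (lt_of_lt_of_le (EReal.bot_lt_coe _) hcomb)
    have hlamnt : Sm (μ0 : Measure X) (lam : Measure X) ≠ ⊤ :=
      (lt_of_le_of_lt (Sm_nonpos _ _) (EReal.coe_lt_top 0)).ne
    set L := (Sm (μ0 : Measure X) (lam : Measure X)).toReal with hLdef
    have hLlam : Sm (μ0 : Measure X) (lam : Measure X) = (L : EReal) :=
      (EReal.coe_toReal hlamnt hlamnb).symm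
    have hLge : t * p + (1 - t) * q ≤ L := by rw [hLlam] at hcomb; exact_mod_cast hcomb
    have hLle0 : L ≤ 0 := by
      have := Sm_nonpos (μ0 : Measure X) (lam : Measure X); rw [hLlam] at this
      exact_mod_cast this
    -- energy of lam
    have hElam := hEconv μ ν (1 - t) (by linarith) (by linarith)
    rw [hEμ, hEν, show (1 - (1 - t) : ℝ) = t from by ring, ← EReal.coe_mul, ← EReal.coe_mul,
      ← EReal.coe_add] at hElam
    have hElamnt : E lam ≠ ⊤ := (lt_of_le_of_lt hElam (EReal.coe_lt_top _)).ne
    set w := (E lam).toReal with hwdef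
    have hElamw : E lam = (w : EReal) := (EReal.coe_toReal hElamnt (hEbot lam)).symm
    have hwz : w ≤ z := by rw [hElamw] at hElam; exact_mod_cast hElam
    -- it suffices to find ρ at energy z with large entropy
    suffices hρ : ∃ ρ : ProbabilityMeasure X, E ρ = (z : EReal) ∧
        ((t * a' + (1 - t) * b' : ℝ) : EReal) ≤ Sm (μ0 : Measure X) (ρ : Measure X) by
      obtain ⟨ρ, hρ1, hρ2⟩ := hρ
      exact le_trans hρ2 (le_sSup ⟨ρ, hρ1, rfl⟩)
    rcases eq_or_lt_of_le hwz with hweq | hwlt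
    · refine ⟨lam, by rw [hElamw, hweq], ?_⟩
      exact le_trans (EReal.coe_le_coe_iff.mpr (by nlinarith)) hcomb
    rcases eq_or_lt_of_le hzle with hze0 | hzlt
    · refine ⟨μ0, by rw [he0, hze0], ?_⟩
      rw [Sm_self]
      exact_mod_cast (by nlinarith : t * a' + (1 - t) * b' ≤ (0:ℝ))
    -- main case: w < z < e0
    set P : ℝ → ProbabilityMeasure X := fun s => pmAffine lam μ0 s with hP
    set g : ℝ → EReal := fun s => E (P s) with hg
    have hgle : ∀ s, 0 ≤ s → s ≤ 1 → g s ≤ (((1 - s) * w + s * e0 : ℝ) : EReal) := by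
      intro s h0 h1
      have h2 := hEconv lam μ0 s h0 h1
      rw [hElamw, he0, ← EReal.coe_mul, ← EReal.coe_mul, ← EReal.coe_add] at h2
      exact h2
    have hgnt : ∀ s ∈ Icc (0:ℝ) 1, g s ≠ ⊤ := fun s hs =>
      (lt_of_le_of_lt (hgle s hs.1 hs.2) (EReal.coe_lt_top _)).ne
    set G : ℝ → ℝ := fun s => (g s).toReal with hGdef
    have hgG : ∀ s ∈ Icc (0:ℝ) 1, g s = ((G s : ℝ) : EReal) := fun s hs =>
      (EReal.coe_toReal (hgnt s hs) (hEbot _)).symm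
    have hGconv : ConvexOn ℝ (Icc (0:ℝ) 1) G := by
      refine ⟨convex_Icc 0 1, ?_⟩
      intro u hu v hv c d hc hd hcd
      have hd1 : d ≤ 1 := by linarith
      have hc' : c = 1 - d := by linarith
      have hcomb2 := hEconv (P u) (P v) d hd hd1
      have hcompeq := pmAffine_comp lam μ0 hu.1 hu.2 hv.1 hv.2 hd hd1
      rw [show pmAffine (P u) (P v) d = pmAffine (pmAffine lam μ0 u) (pmAffine lam μ0 v) d
        from rfl, hcompeq] at hcomb2
      have hmem : (1 - d) * u + d * v ∈ Icc (0:ℝ) 1 :=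
        ⟨by nlinarith [hu.1, hu.2, hv.1, hv.2], by nlinarith [hu.1, hu.2, hv.1, hv.2]⟩
      have hcomb2' : g ((1 - d) * u + d * v)
          ≤ ((1 - d : ℝ) : EReal) * g u + ((d : ℝ) : EReal) * g v := hcomb2
      rw [hgG _ hu, hgG _ hv, hgG _ hmem, ← EReal.coe_mul, ← EReal.coe_mul,
        ← EReal.coe_add] at hcomb2'
      have hreal : G ((1 - d) * u + d * v) ≤ (1 - d) * G u + d * G v := by
        exact_mod_cast hcomb2'
      rw [smul_eq_mul, smul_eq_mul, smul_eq_mul, smul_eq_mul, hc']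
      exact hreal
    have hGc : ContinuousOn G (Ioo (0:ℝ) 1) :=
      ConvexOn.continuousOn isOpen_Ioo (hGconv.subset Ioo_subset_Icc_self (convex_Ioo 0 1))
    have hwe0 : w < e0 := lt_trans hwlt hzlt
    set a0 := (z - w) / (2 * (e0 - w)) with ha0
    have ha0pos : 0 < a0 := div_pos (by linarith) (by linarith)
    have ha0lt1 : a0 < 1 := by
      rw [ha0, div_lt_one (by linarith)]; linarith
    have hGa0 : G a0 < z := by
      have h1 := hgle a0 ha0pos.le ha0lt1.le
      have h2 : (1 - a0) * w + a0 * e0 < z := by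
        have e2 : (1 - a0) * w + a0 * e0 = w + a0 * (e0 - w) := by ring
        have e3 : a0 * (e0 - w) = (z - w) / 2 := by
          rw [ha0, div_mul_eq_mul_div, mul_comm (2:ℝ) (e0 - w), mul_comm (z - w) (e0 - w),
            mul_div_mul_left _ _ (by linarith : e0 - w ≠ 0)]
        rw [e2, e3]; linarith
      have h3 : G a0 ≤ (1 - a0) * w + a0 * e0 := by
        have := EReal.toReal_le_toReal h1 (hEbot _) (EReal.coe_ne_top _)
        rwa [EReal.toReal_coe] at this
      linarith
    -- lower semicontinuity near s = 1
    have htendP : Tendsto P (𝓝[Icc (0:ℝ) 1] 1) (𝓝 μ0) := pmAffine_tendsto_one lam μ0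
    have hlsc := hElsc μ0 (z : EReal) (by show E μ0 > (z : EReal); rw [he0]; exact_mod_cast hzlt)
    have hev : ∀ᶠ s in 𝓝[Icc (0:ℝ) 1] 1, (z : EReal) < g s := htendP.eventually hlsc
    have hev2 : ∀ᶠ s in 𝓝[Ico (0:ℝ) 1] 1, (z : EReal) < g s :=
      hev.filter_mono (nhdsWithin_mono 1 Ico_subset_Icc_self)
    have hev3 : ∀ᶠ s in 𝓝[Ico (0:ℝ) 1] 1, s ∈ Ioo a0 1 := by
      have hmem : Ioo a0 1 ∈ 𝓝[Ico (0:ℝ) 1] 1 := by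
        rw [mem_nhdsWithin]
        exact ⟨Ioi a0, isOpen_Ioi, ha0lt1, fun s hs => ⟨hs.1, hs.2.2⟩⟩
      exact hmem
    haveI hne : (𝓝[Ico (0:ℝ) 1] 1).NeBot := by
      refine mem_closure_iff_nhdsWithin_neBot.mp ?_
      rw [closure_Ico (by norm_num : (0:ℝ) ≠ 1)]
      exact ⟨by norm_num, le_refl 1⟩
    obtain ⟨b0, hzb0, hb0mem⟩ := (hev2.and hev3).exists
    have hIsub : Icc a0 b0 ⊆ Ioo (0:ℝ) 1 := fun s hs =>
      ⟨lt_of_lt_of_le ha0pos hs.1, lt_of_le_of_lt hs.2 hb0mem.2⟩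
    have hcont2 : ContinuousOn G (Icc a0 b0) := hGc.mono hIsub
    have hb01 : b0 ∈ Icc (0:ℝ) 1 := ⟨(lt_trans ha0pos hb0mem.1).le, hb0mem.2.le⟩
    have hGb0 : z < G b0 := by
      rw [hgG b0 hb01] at hzb0; exact_mod_cast hzb0
    obtain ⟨sstar, hsmem, hGs⟩ :=
      intermediate_value_Icc hb0mem.1.le hcont2 ⟨hGa0.le, hGb0.le⟩
    have hs01 : sstar ∈ Icc (0:ℝ) 1 := Ioo_subset_Icc_self (hIsub hsmem)
    have hEρ : E (P sstar) = (z : EReal) := by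
      have : g sstar = (z : EReal) := by rw [hgG _ hs01, hGs]
      exact this
    have hS0 : Sm (μ0 : Measure X) ((μ0 : ProbabilityMeasure X) : Measure X) ≠ ⊥ := by
      rw [Sm_self]; simp
    have hcomb3 := Sm_concave μ0 lam μ0 (s := sstar) hs01.1 hs01.2 hlamnb hS0
    rw [Sm_self, mul_zero, add_zero, hLlam, ← EReal.coe_mul] at hcomb3
    refine ⟨P sstar, hEρ, ?_⟩
    refine le_trans ?_ hcomb3
    apply EReal.coe_le_coe_iff.mpr
    have hstep1 : t * a' + (1 - t) * b' ≤ t * p + (1 - t) * q :=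
      add_le_add (mul_le_mul_of_nonneg_left hpa.le ht0)
        (mul_le_mul_of_nonneg_left hqb.le (by linarith))
    have hsl : sstar * L ≤ 0 := mul_nonpos_iff.mpr (Or.inl ⟨hs01.1, hLle0⟩)
    have hexp : (1 - sstar) * L = L - sstar * L := by ring
    linarith
  -- conclude from the key claim
  rw [hax, hbyy, ← EReal.coe_mul, ← EReal.coe_mul, ← EReal.coe_add]
  by_contra hcon
  push_neg at hcon
  have hznb : Sent μ0 E z ≠ ⊥ := by
    intro hzb
    have := key (a - 1) (b - 1) (by rw [hax]; exact_mod_cast (by linarith : a - 1 < a))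
      (by rw [hbyy]; exact_mod_cast (by linarith : b - 1 < b))
    rw [hzb] at this
    exact (EReal.coe_ne_bot _) (le_bot_iff.mp this)
  have hznt : Sent μ0 E z ≠ ⊤ := (lt_of_le_of_lt (hSle0 z) (EReal.coe_lt_top 0)).ne
  set c := (Sent μ0 E z).toReal with hc
  have hcz : Sent μ0 E z = (c : EReal) := (EReal.coe_toReal hznt hznb).symm
  rw [hcz] at hcon
  have hclt : c < t * a + (1 - t) * b := by exact_mod_cast hcon
  set ε := (t * a + (1 - t) * b - c) / 2 with hε
  have hεpos : 0 < ε := by rw [hε]; linarith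
  have hkey := key (a - ε) (b - ε) (by rw [hax]; exact_mod_cast (by linarith : a - ε < a))
    (by rw [hbyy]; exact_mod_cast (by linarith : b - ε < b))
  rw [hcz] at hkey
  have : t * (a - ε) + (1 - t) * (b - ε) ≤ c := by exact_mod_cast hkey
  have he : t * (a - ε) + (1 - t) * (b - ε) = t * a + (1 - t) * b - ε := by ring
  rw [he] at this
  rw [hε] at this
  linarith
end
end

section
/- Let Φ : (−∞, 0) → ℝ be a convex function which is bounded as t → 0⁻ (i.e. bounded on [−1, 0)). Then ∫_{−∞}^0 e^{−Φ(t)} dt < ∞ if and only if lim_{t → −∞} Φ'(t) < 0, where Φ' denotes either the left or the right derivative (the limit exists in [−∞, ∞) by convexity). -/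
open MeasureTheory Filter Set Topology
open scoped Classical ENNReal

noncomputable section

namespace Statement15Aux

/-- The right-derivative candidate of a convex function on `(-∞, 0)`. -/
def rdF (Φ : ℝ → ℝ) (x : ℝ) : ℝ := sInf (slope Φ x '' Ioo x 0)

/-- The left-derivative candidate of a convex function on `(-∞, 0)`. -/
def ldF (Φ : ℝ → ℝ) (x : ℝ) : ℝ := sSup (slope Φ x '' Iio x)

variable {Φ : ℝ → ℝ} (hconv : ConvexOn ℝ (Iio (0:ℝ)) Φ)
include hconv

lemma slmono {a x y : ℝ} (ha : a < 0) (hx : x < 0) (hy : y < 0)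
    (hxa : x ≠ a) (hya : y ≠ a) (hxy : x ≤ y) : slope Φ a x ≤ slope Φ a y := by
  rw [slope_def_field, slope_def_field]
  exact hconv.secant_mono (mem_Iio.2 ha) (mem_Iio.2 hx) (mem_Iio.2 hy) hxa hya hxy

lemma rd_bdd {x : ℝ} (hx : x < 0) : BddBelow (slope Φ x '' Ioo x 0) := by
  refine ⟨slope Φ x (x-1), ?_⟩
  rintro _ ⟨y, hy, rfl⟩
  exact slmono hconv hx (by linarith) hy.2 (by linarith) hy.1.ne' (by linarith [hy.1])

omit hconv in
lemma rd_nonempty {x : ℝ} (hx : x < 0) : (slope Φ x '' Ioo x 0).Nonempty :=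
  ⟨slope Φ x (x/2), mem_image_of_mem _ ⟨by linarith, by linarith⟩⟩

lemma rd_le {x y : ℝ} (hx : x < 0) (hy : y ∈ Ioo x 0) : rdF Φ x ≤ slope Φ x y :=
  csInf_le (rd_bdd hconv hx) (mem_image_of_mem _ hy)

lemma le_rd {x c : ℝ} (hx : x < 0) (h : ∀ y ∈ Ioo x 0, c ≤ slope Φ x y) : c ≤ rdF Φ x := by
  refine le_csInf (rd_nonempty hx) ?_
  rintro _ ⟨y, hy, rfl⟩
  exact h y hy

lemma ld_bddAbove {x : ℝ} (hx : x < 0) : BddAbove (slope Φ x '' Iio x) := by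
  refine ⟨slope Φ x (x/2), ?_⟩
  rintro _ ⟨y, hy, rfl⟩
  exact slmono hconv hx (hy.trans hx) (by linarith) hy.ne (by linarith) (by linarith [mem_Iio.1 hy])

lemma le_ld {x y : ℝ} (hx : x < 0) (hy : y < x) : slope Φ x y ≤ ldF Φ x :=
  le_csSup (ld_bddAbove hconv hx) (mem_image_of_mem _ hy)

omit hconv in
lemma ld_le {x c : ℝ} (_hx : x < 0) (h : ∀ y < x, slope Φ x y ≤ c) : ldF Φ x ≤ c := by
  refine csSup_le ⟨slope Φ x (x-1), mem_image_of_mem _ (by simp [sub_lt_self_iff])⟩ ?_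
  rintro _ ⟨y, hy, rfl⟩
  exact h y hy

lemma ld_le_rd {x : ℝ} (hx : x < 0) : ldF Φ x ≤ rdF Φ x := by
  refine ld_le hx fun y hy => le_rd hconv hx fun z hz => ?_
  exact slmono hconv hx (hy.trans hx) hz.2 hy.ne hz.1.ne' (hy.le.trans hz.1.le)

lemma rd_le_ld {x y : ℝ} (hxy : x < y) (hy : y < 0) : rdF Φ x ≤ ldF Φ y := by
  have hx : x < 0 := hxy.trans hy
  calc rdF Φ x ≤ slope Φ x y := rd_le hconv hx ⟨hxy, hy⟩
    _ = slope Φ y x := slope_comm _ _ _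
    _ ≤ ldF Φ y := le_ld hconv hy hxy

lemma rd_mono {x y : ℝ} (hx : x < 0) (hy : y < 0) (hxy : x ≤ y) : rdF Φ x ≤ rdF Φ y := by
  rcases eq_or_lt_of_le hxy with rfl | hlt
  · exact le_rfl
  calc rdF Φ x ≤ slope Φ x y := rd_le hconv hx ⟨hlt, hy⟩
    _ ≤ rdF Φ y := by
        refine le_rd hconv hy fun z hz => ?_
        calc slope Φ x y = slope Φ y x := slope_comm _ _ _
          _ ≤ slope Φ y z := slmono hconv hy hx hz.2 hlt.ne hz.1.ne' (hlt.le.trans hz.1.le)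

lemma ld_mono {x y : ℝ} (hx : x < 0) (hy : y < 0) (hxy : x ≤ y) : ldF Φ x ≤ ldF Φ y := by
  rcases eq_or_lt_of_le hxy with rfl | hlt
  · exact le_rfl
  exact (ld_le_rd hconv hx).trans (rd_le_ld hconv hlt hy)

/-- Supporting line bound from the left derivative. -/
lemma support {x t : ℝ} (hx : x < 0) (ht : t < x) : Φ x + ldF Φ x * (t - x) ≤ Φ t := by
  have h := le_ld hconv hx ht
  rw [slope_def_field] at h
  have htx : t - x < 0 := by linarith
  rw [div_le_iff_of_neg htx] at h
  linarith

lemma mono_of_rd_nonneg (h : ∀ s < (0:ℝ), 0 ≤ rdF Φ s) {x y : ℝ} (hx : x < 0) (hy : y < 0)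
    (hxy : x ≤ y) : Φ x ≤ Φ y := by
  rcases eq_or_lt_of_le hxy with rfl | hlt
  · exact le_rfl
  have h2 := (h x hx).trans (rd_le hconv hx ⟨hlt, hy⟩)
  rw [slope_def_field] at h2
  have hpos : 0 < y - x := by linarith
  rw [le_div_iff₀ hpos] at h2
  linarith

lemma rd_hasDeriv {x : ℝ} (hx : x < 0) : HasDerivWithinAt Φ (rdF Φ x) (Ici x) x := by
  rw [hasDerivWithinAt_iff_tendsto_slope, Ici_sdiff_left]
  refine MonotoneOn.tendsto_nhdsWithin_Ioo_right ⟨x/2, by constructor <;> linarith⟩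
    (fun a ha b hb hab => slmono hconv hx ha.2 hb.2 ha.1.ne' hb.1.ne' hab) (rd_bdd hconv hx)

lemma ld_hasDeriv {x : ℝ} (hx : x < 0) : HasDerivWithinAt Φ (ldF Φ x) (Iic x) x := by
  rw [hasDerivWithinAt_iff_tendsto_slope, Iic_diff_right]
  exact MonotoneOn.tendsto_nhdsLT
    (fun a ha b hb hab => slmono hconv hx (ha.trans hx) (hb.trans hx) ha.ne hb.ne hab)
    (ld_bddAbove hconv hx)

lemma rd_deriv {x : ℝ} (hx : x < 0) : derivWithin Φ (Ici x) x = rdF Φ x :=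
  (rd_hasDeriv hconv hx).derivWithin (uniqueDiffOn_Ici x x self_mem_Ici)

lemma ld_deriv {x : ℝ} (hx : x < 0) : derivWithin Φ (Iic x) x = ldF Φ x :=
  (ld_hasDeriv hconv hx).derivWithin (uniqueDiffOn_Iic x x self_mem_Iic)

omit hconv

lemma tendsto_coe_atBot (F : ℝ → ℝ)
    (hmono : ∀ ⦃x y : ℝ⦄, x < 0 → y < 0 → x ≤ y → F x ≤ F y) :
    Tendsto (fun t : ℝ => ((F t : ℝ) : EReal)) atBot
      (nhds (⨅ t : Iio (0:ℝ), ((F t : ℝ) : EReal))) := by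
  refine tendsto_order.2 ⟨fun a ha => ?_, fun b hb => ?_⟩
  · filter_upwards [eventually_lt_atBot (0:ℝ)] with t ht
    exact ha.trans_le (iInf_le _ (⟨t, ht⟩ : Iio (0:ℝ)))
  · obtain ⟨⟨s, hs⟩, hsb⟩ := iInf_lt_iff.1 hb
    filter_upwards [eventually_le_atBot s] with t ht
    exact lt_of_le_of_lt (EReal.coe_le_coe_iff.2 (hmono (lt_of_le_of_lt ht hs) hs ht)) hsb

lemma iInf_lt_zero_iff (F : ℝ → ℝ) :
    (⨅ t : Iio (0:ℝ), ((F t : ℝ) : EReal)) < 0 ↔ ∃ s : ℝ, s < 0 ∧ F s < 0 := by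
  rw [iInf_lt_iff]
  constructor
  · rintro ⟨⟨s, hs⟩, h⟩
    refine ⟨s, hs, ?_⟩
    have h2 : ((F s : ℝ) : EReal) < ((0:ℝ) : EReal) := by simpa using h
    exact EReal.coe_lt_coe_iff.1 h2
  · rintro ⟨s, hs, h⟩
    exact ⟨⟨s, hs⟩, by exact_mod_cast h⟩

lemma tendsto_iff_exists (F : ℝ → ℝ)
    (hmono : ∀ ⦃x y : ℝ⦄, x < 0 → y < 0 → x ≤ y → F x ≤ F y) :
    (∃ L : EReal, L < 0 ∧ Tendsto (fun t : ℝ => ((F t : ℝ) : EReal)) atBot (nhds L)) ↔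
      ∃ s : ℝ, s < 0 ∧ F s < 0 := by
  constructor
  · rintro ⟨L, hL, hT⟩
    have hLI := tendsto_nhds_unique hT (tendsto_coe_atBot F hmono)
    exact (iInf_lt_zero_iff F).1 (hLI ▸ hL)
  · intro h
    exact ⟨_, (iInf_lt_zero_iff F).2 h, tendsto_coe_atBot F hmono⟩

lemma lint_exp (s a b : ℝ) (hb : 0 < b) :
    (∫⁻ t in Iio s, ENNReal.ofReal (Real.exp (a + b * t))) < ⊤ := by
  have h1 : IntegrableOn (fun x : ℝ => Real.exp a * Real.exp (-b * x)) (Ioi (-s)) :=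
    (exp_neg_integrableOn_Ioi _ hb).const_mul _
  have h2 : IntegrableOn (fun t : ℝ => Real.exp (a + b * t)) (Iio s) := by
    have h3 := (MeasurePreserving.integrableOn_comp_preimage
      (Measure.measurePreserving_neg (volume : Measure ℝ))
      (Homeomorph.neg ℝ).measurableEmbedding
      (f := fun x : ℝ => Real.exp a * Real.exp (-b * x)) (s := Ioi (-s))).2 h1
    have hset : (Neg.neg ⁻¹' Ioi (-s) : Set ℝ) = Iio s := by ext t; simp
    rw [hset] at h3
    refine h3.congr_fun (fun t _ => ?_) measurableSet_Iio
    simp [Function.comp, ← Real.exp_add, mul_comm]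
  have h4 : 0 ≤ᵐ[volume.restrict (Iio s)] fun t : ℝ => Real.exp (a + b * t) :=
    Eventually.of_forall fun t => (Real.exp_pos _).le
  exact (hasFiniteIntegral_iff_ofReal h4).1 h2.2

include hconv

lemma finite_side (hbdd : ∃ C : ℝ, ∀ t ∈ Ico (-1 : ℝ) 0, |Φ t| ≤ C)
    {s : ℝ} (hs : s < 0) (hneg : ldF Φ s < 0) :
    (∫⁻ t in Iio (0:ℝ), ENNReal.ofReal (Real.exp (-Φ t))) < ⊤ := by
  obtain ⟨C, hC⟩ := hbdd
  set s' : ℝ := min s (-2) with hs'def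
  have hs2 : s' ≤ -2 := min_le_right _ _
  have hs' : s' < 0 := by linarith
  set c : ℝ := ldF Φ s' with hcdef
  have hc : c < 0 := lt_of_le_of_lt (ld_mono hconv hs' hs (min_le_left _ _)) hneg
  set D : ℝ := C + |ldF Φ (-1)| * (-s') with hDdef
  have hCD : C ≤ D := by
    have : 0 ≤ |ldF Φ (-1)| * (-s') := mul_nonneg (abs_nonneg _) (by linarith)
    linarith
  have key2 : ∀ t ∈ Ico s' (0:ℝ), -D ≤ Φ t := by
    rintro t ⟨ht1, ht2⟩
    by_cases h : t < -1
    · have hsup := support hconv (x := (-1:ℝ)) (by norm_num) h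
      have hC1 : |Φ (-1)| ≤ C := hC (-1) ⟨le_refl _, by norm_num⟩
      have habs : |ldF Φ (-1) * (t - (-1))| ≤ |ldF Φ (-1)| * (-s') := by
        rw [abs_mul]
        refine mul_le_mul_of_nonneg_left ?_ (abs_nonneg _)
        rw [abs_of_nonpos (by linarith)]
        linarith
      have hneg1 := neg_abs_le (ldF Φ (-1) * (t - (-1)))
      have hC1' := (abs_le.1 hC1).1
      linarith
    · push_neg at h
      have := (abs_le.1 (hC t ⟨h, ht2⟩)).1
      linarith
  have key1 : ∀ t < s', -Φ t ≤ (-Φ s' + c * s') + (-c) * t := by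
    intro t ht
    have := support hconv hs' ht
    nlinarith [this]
  have hsplit : (Iio (0:ℝ)) = Iio s' ∪ Ico s' 0 := (Iio_union_Ico_eq_Iio hs'.le).symm
  have hdisj : Disjoint (Iio s') (Ico s' (0:ℝ)) := by
    rw [Set.disjoint_left]
    rintro t ht1 ht2
    exact absurd ht2.1 (not_le.2 ht1)
  rw [hsplit, lintegral_union measurableSet_Ico hdisj]
  refine ENNReal.add_lt_top.2 ⟨?_, ?_⟩
  · calc (∫⁻ t in Iio s', ENNReal.ofReal (Real.exp (-Φ t)))
        ≤ ∫⁻ t in Iio s', ENNReal.ofReal (Real.exp ((-Φ s' + c * s') + (-c) * t)) := by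
          refine lintegral_mono_ae ?_
          filter_upwards [ae_restrict_mem measurableSet_Iio] with t ht
          exact ENNReal.ofReal_le_ofReal (Real.exp_le_exp.2 (key1 t ht))
      _ < ⊤ := lint_exp _ _ _ (by linarith)
  · calc (∫⁻ t in Ico s' (0:ℝ), ENNReal.ofReal (Real.exp (-Φ t)))
        ≤ ∫⁻ _t in Ico s' (0:ℝ), ENNReal.ofReal (Real.exp D) := by
          refine lintegral_mono_ae ?_
          filter_upwards [ae_restrict_mem measurableSet_Ico] with t ht
          exact ENNReal.ofReal_le_ofReal (Real.exp_le_exp.2 (by linarith [key2 t ht]))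
      _ = ENNReal.ofReal (Real.exp D) * volume (Ico s' (0:ℝ)) := setLIntegral_const _ _
      _ < ⊤ := by
          rw [Real.volume_Ico]
          exact ENNReal.mul_lt_top ENNReal.ofReal_lt_top ENNReal.ofReal_lt_top

lemma infinite_side (hbdd : ∃ C : ℝ, ∀ t ∈ Ico (-1 : ℝ) 0, |Φ t| ≤ C)
    (h : ∀ s < (0:ℝ), 0 ≤ rdF Φ s) :
    ¬ (∫⁻ t in Iio (0:ℝ), ENNReal.ofReal (Real.exp (-Φ t))) < ⊤ := by
  obtain ⟨C, hC⟩ := hbdd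
  have key : ∀ t < (-1:ℝ), ENNReal.ofReal (Real.exp (-C)) ≤ ENNReal.ofReal (Real.exp (-Φ t)) := by
    intro t ht
    have h1 : Φ t ≤ Φ (-1) :=
      mono_of_rd_nonneg hconv h (by linarith) (by norm_num) ht.le
    have h2 : Φ (-1) ≤ C := (abs_le.1 (hC (-1) ⟨le_refl _, by norm_num⟩)).2
    exact ENNReal.ofReal_le_ofReal (Real.exp_le_exp.2 (by linarith))
  have htop : (⊤ : ℝ≥0∞) ≤ ∫⁻ t in Iio (0:ℝ), ENNReal.ofReal (Real.exp (-Φ t)) := by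
    calc (⊤ : ℝ≥0∞) = ENNReal.ofReal (Real.exp (-C)) * volume (Iio (-1:ℝ)) := by
          rw [Real.volume_Iio, ENNReal.mul_top (by positivity)]
      _ = ∫⁻ _t in Iio (-1:ℝ), ENNReal.ofReal (Real.exp (-C)) := (setLIntegral_const _ _).symm
      _ ≤ ∫⁻ t in Iio (-1:ℝ), ENNReal.ofReal (Real.exp (-Φ t)) := by
          refine lintegral_mono_ae ?_
          filter_upwards [ae_restrict_mem measurableSet_Iio] with t ht
          exact key t ht
      _ ≤ ∫⁻ t in Iio (0:ℝ), ENNReal.ofReal (Real.exp (-Φ t)) :=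
          lintegral_mono' (Measure.restrict_mono (Iio_subset_Iio (by norm_num)) le_rfl) le_rfl
  simp [top_le_iff.1 htop]

end Statement15Aux

open Statement15Aux in
/-- Let `Φ : (-∞, 0) → ℝ` be convex and bounded as `t → 0⁻` (i.e. bounded
on `[-1, 0)`). Then `∫_{-∞}^0 e^{-Φ(t)} dt < ∞` if and only if `lim_{t → -∞} Φ'(t) < 0`,
where `Φ'` denotes either the right or the left derivative (the limit exists in `[-∞, ∞)`
by convexity). -/
theorem statement15 (Φ : ℝ → ℝ)
    (hconv : ConvexOn ℝ (Iio (0:ℝ)) Φ)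
    (hbdd : ∃ C : ℝ, ∀ t ∈ Ico (-1 : ℝ) 0, |Φ t| ≤ C) :
    ((∫⁻ t in Iio (0:ℝ), ENNReal.ofReal (Real.exp (-Φ t))) < ⊤ ↔
      ∃ L : EReal, L < 0 ∧
        Tendsto (fun t : ℝ => ((derivWithin Φ (Ici t) t : ℝ) : EReal)) atBot (nhds L)) ∧
    ((∫⁻ t in Iio (0:ℝ), ENNReal.ofReal (Real.exp (-Φ t))) < ⊤ ↔
      ∃ L : EReal, L < 0 ∧
        Tendsto (fun t : ℝ => ((derivWithin Φ (Iic t) t : ℝ) : EReal)) atBot (nhds L)) := by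
  have hrdmono : ∀ ⦃x y : ℝ⦄, x < 0 → y < 0 → x ≤ y → rdF Φ x ≤ rdF Φ y :=
    fun x y hx hy hxy => rd_mono hconv hx hy hxy
  have hldmono : ∀ ⦃x y : ℝ⦄, x < 0 → y < 0 → x ≤ y → ldF Φ x ≤ ldF Φ y :=
    fun x y hx hy hxy => ld_mono hconv hx hy hxy
  -- the basic finiteness criterion
  have hP : (∫⁻ t in Iio (0:ℝ), ENNReal.ofReal (Real.exp (-Φ t))) < ⊤ ↔
      ∃ s : ℝ, s < 0 ∧ rdF Φ s < 0 := by
    constructor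
    · intro h
      by_contra hno
      push_neg at hno
      exact infinite_side hconv hbdd hno h
    · rintro ⟨s, hs, hr⟩
      exact finite_side hconv hbdd hs ((ld_le_rd hconv hs).trans_lt hr)
  have hEquiv : (∃ s : ℝ, s < 0 ∧ rdF Φ s < 0) ↔ ∃ s : ℝ, s < 0 ∧ ldF Φ s < 0 := by
    constructor
    · rintro ⟨s, hs, hr⟩
      exact ⟨s, hs, (ld_le_rd hconv hs).trans_lt hr⟩
    · rintro ⟨s, hs, hl⟩
      exact ⟨s - 1, by linarith, (rd_le_ld hconv (by linarith) hs).trans_lt hl⟩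
  have hEqR : (fun t : ℝ => ((derivWithin Φ (Ici t) t : ℝ) : EReal)) =ᶠ[atBot]
      (fun t : ℝ => ((rdF Φ t : ℝ) : EReal)) := by
    filter_upwards [eventually_lt_atBot (0:ℝ)] with t ht
    rw [rd_deriv hconv ht]
  have hEqL : (fun t : ℝ => ((derivWithin Φ (Iic t) t : ℝ) : EReal)) =ᶠ[atBot]
      (fun t : ℝ => ((ldF Φ t : ℝ) : EReal)) := by
    filter_upwards [eventually_lt_atBot (0:ℝ)] with t ht
    rw [ld_deriv hconv ht]
  constructor
  · refine hP.trans ?_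
    refine ((tendsto_iff_exists (rdF Φ) hrdmono).symm).trans ?_
    exact exists_congr fun L => and_congr_right fun _ => (tendsto_congr' hEqR).symm
  · refine (hP.trans hEquiv).trans ?_
    refine ((tendsto_iff_exists (ldF Φ) hldmono).symm).trans ?_
    exact exists_congr fun L => and_congr_right fun _ => (tendsto_congr' hEqL).symm
end
end
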